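/- arXiv:2602.15739 — 3 statements merged into one kernel-verified Lean document; each statement's English description precedes it below -/
import Mathlib

section
/- Let N = (P,T,F) be a free-choice Petri net, let t ∈ T, and let N' be a sound free-choice WF-net node-disjoint from N. Then the substitutive composition N_[t→N'] is a free-choice Petri net. -/
/-!
Common formalization of Petri nets, workflow nets (WF-nets), POWL 2.0 models,
and the WF-net-to-POWL conversion algorithm.
-/

noncomputable section
attribute [local instance] Classical.propDecidable

/-- A Petri-net-like structure over natural-number nodes, with designated
source/sink places and a labeling of transitions (`none` = silent τ). -/
structure Net where
  places : Finset ℕ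
  transitions : Finset ℕ
  flow : Finset (ℕ × ℕ)
  label : ℕ → Option ℕ
  source : ℕ
  sink : ℕ

abbrev Marking := ℕ → ℕ

namespace Net

/-- Pre-set of a node. -/
def pre (N : Net) (x : ℕ) : Finset ℕ := (N.flow.filter fun e => e.2 = x).image Prod.fst

/-- Post-set of a node. -/
def post (N : Net) (x : ℕ) : Finset ℕ := (N.flow.filter fun e => e.1 = x).image Prod.snd

/-- `N` is a Petri net: places and transitions are finite disjoint sets and
the flow only connects places to transitions and vice versa. -/
def IsPetri (N : Net) : Prop :=
  Disjoint N.places N.transitions ∧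
  ∀ e ∈ N.flow, (e.1 ∈ N.places ∧ e.2 ∈ N.transitions) ∨ (e.1 ∈ N.transitions ∧ e.2 ∈ N.places)

/-- Directed-path (reflexive-transitive) reachability along the flow relation. -/
def pathRel (N : Net) : ℕ → ℕ → Prop := Relation.ReflTransGen (fun a b => (a, b) ∈ N.flow)

/-- `N` is a workflow net: a Petri net with a unique source place, a unique
sink place, and every node on a path from the source to the sink. -/
def IsWF (N : Net) : Prop :=
  N.IsPetri ∧
  N.source ∈ N.places ∧ N.sink ∈ N.places ∧
  (∀ p ∈ N.places, N.pre p = ∅ ↔ p = N.source) ∧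
  (∀ p ∈ N.places, N.post p = ∅ ↔ p = N.sink) ∧
  (∀ x ∈ N.places ∪ N.transitions, N.pathRel N.source x ∧ N.pathRel x N.sink)

/-- A transition is enabled at a marking if every place of its pre-set holds a token. -/
def enabled (N : Net) (t : ℕ) (M : Marking) : Prop :=
  t ∈ N.transitions ∧ ∀ p ∈ N.pre t, 1 ≤ M p

/-- Firing an enabled transition consumes one token from each input place and
produces one token in each output place. -/
def fire (N : Net) (t : ℕ) (M M' : Marking) : Prop :=
  N.enabled t M ∧
  ∀ p, M' p + (if p ∈ N.pre t then 1 else 0) = M p + (if p ∈ N.post t then 1 else 0)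

/-- `N.firingSeq M σ M'`: firing the sequence σ of transitions leads from M to M'. -/
def firingSeq (N : Net) : Marking → List ℕ → Marking → Prop
  | M, [], M' => M' = M
  | M, t :: σ, M' => ∃ M₁, N.fire t M M₁ ∧ N.firingSeq M₁ σ M'

/-- A marking is reachable from another if some firing sequence leads to it. -/
def reachable (N : Net) (M M' : Marking) : Prop := ∃ σ, N.firingSeq M σ M'

/-- The initial marking [source]. -/
def initM (N : Net) : Marking := fun p => if p = N.source then 1 else 0

/-- The final marking [sink]. -/
def finalM (N : Net) : Marking := fun p => if p = N.sink then 1 else 0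

/-- Soundness: no dead transitions, option to complete, proper completion. -/
def Sound (N : Net) : Prop :=
  (∀ t ∈ N.transitions, ∃ M, N.reachable N.initM M ∧ N.enabled t M) ∧
  (∀ M, N.reachable N.initM M → N.reachable M N.finalM) ∧
  (∀ M, N.reachable N.initM M → 1 ≤ M N.sink → M = N.finalM)

/-- Safeness: each place holds at most one token in every reachable marking. -/
def Safe (N : Net) : Prop :=
  ∀ M, N.reachable N.initM M → ∀ p, M p ≤ 1

/-- The language: label sequences (τ omitted) of firing sequences from [source] to [sink]. -/
def lang (N : Net) : Set (List ℕ) :=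
  { w | ∃ σ, N.firingSeq N.initM σ N.finalM ∧ w = σ.filterMap N.label }

/-- The entry points ◦T' of a set of transitions T'. -/
def entry (N : Net) (T' : Finset ℕ) : Finset ℕ :=
  N.places.filter fun p =>
    (N.post p ∩ T').Nonempty ∧ (p = N.source ∨ (N.pre p ∩ (N.transitions \ T')).Nonempty)

/-- The exit points T'◦ of a set of transitions T'. -/
def exit (N : Net) (T' : Finset ℕ) : Finset ℕ :=
  N.places.filter fun p =>
    (N.pre p ∩ T').Nonempty ∧ (p = N.sink ∨ (N.post p ∩ (N.transitions \ T')).Nonempty)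

/-- Two places are equivalent with respect to T'. -/
def equivWrt (N : Net) (T' : Finset ℕ) (p p' : ℕ) : Prop :=
  N.pre p ∩ T' = N.pre p' ∩ T' ∧ N.post p ∩ T' = N.post p' ∩ T'

/-- The places adjacent to some transition of T' (written P|_{T'}). -/
def adjP (N : Net) (T' : Finset ℕ) : Finset ℕ :=
  N.places.filter fun p => ((N.pre p ∪ N.post p) ∩ T').Nonempty

/-- A natural number larger than every node of N. -/
def freshBase (N : Net) : ℕ :=
  ((N.places ∪ N.transitions ∪ {N.source, N.sink}).sup id) + 1

end Net

/-- `G : Fin n → Finset ℕ` is a partition of the transitions of N into n nonempty parts. -/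
def IsPartition (N : Net) {n : ℕ} (G : Fin n → Finset ℕ) : Prop :=
  (∀ i, (G i).Nonempty) ∧
  (∀ i j, i ≠ j → Disjoint (G i) (G j)) ∧
  Finset.univ.biUnion G = N.transitions

/-- A conflict-hiding partition. -/
def ConflictHiding (N : Net) {n : ℕ} (G : Fin n → Finset ℕ) : Prop :=
  IsPartition N G ∧
  (∀ p, ∀ i j : Fin n, p ∈ N.entry (G i) → p ∈ N.entry (G j) → i = j) ∧
  (∀ p, ∀ i j : Fin n, p ∈ N.exit (G i) → p ∈ N.exit (G j) → i = j) ∧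
  (∀ i : Fin n, ∀ p ∈ N.entry (G i), ∀ p' ∈ N.entry (G i), N.equivWrt (G i) p p') ∧
  (∀ i : Fin n, ∀ p ∈ N.exit (G i), ∀ p' ∈ N.exit (G i), N.equivWrt (G i) p p')

/-- A concurrency-hiding partition: each part has exactly one entry and one exit point. -/
def ConcurrencyHiding (N : Net) {n : ℕ} (G : Fin n → Finset ℕ) : Prop :=
  IsPartition N G ∧ ∀ i, (N.entry (G i)).card = 1 ∧ (N.exit (G i)).card = 1

/-- Normalize(N, p_s, p_e): insert a fresh source (resp. sink) place connected
to p_s (resp. from p_e) through a fresh τ-transition whenever needed. -/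
def Normalize (N : Net) (ps pe : ℕ) : Net :=
  let b := N.freshBase
  let needS := (N.pre ps).Nonempty
  let needE := (N.post pe).Nonempty
  { places := N.places ∪ (if needS then {b} else ∅) ∪ (if needE then {b+2} else ∅)
    transitions := N.transitions ∪ (if needS then {b+1} else ∅) ∪ (if needE then {b+3} else ∅)
    flow := N.flow ∪ (if needS then {(b, b+1), (b+1, ps)} else ∅)
                   ∪ (if needE then {(pe, b+3), (b+3, b+2)} else ∅)
    label := fun x => if x = b+1 ∨ x = b+3 then none else N.label x
    source := if needS then b else ps
    sink := if needE then b+2 else pe }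

/-- The raw partial-order projection of N onto a part T' (before normalization). -/
def poprojectRaw (N : Net) (T' : Finset ℕ) : Net :=
  let b := N.freshBase
  let ps := b
  let pe := b + 1
  let keptP := (N.adjP T' \ (N.entry T' ∪ N.exit T')) ∪ {ps, pe}
  { places := keptP
    transitions := T'
    flow :=
      (N.flow.filter fun e => (e.1 ∈ keptP ∧ e.2 ∈ T') ∨ (e.1 ∈ T' ∧ e.2 ∈ keptP))
      ∪ ((T'.filter fun t => (N.entry T' ∩ N.pre t).Nonempty).image fun t => (ps, t))
      ∪ ((T'.filter fun t => (N.entry T' ∩ N.post t).Nonempty).image fun t => (t, ps))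
      ∪ ((T'.filter fun t => (N.exit T' ∩ N.pre t).Nonempty).image fun t => (pe, t))
      ∪ ((T'.filter fun t => (N.exit T' ∩ N.post t).Nonempty).image fun t => (t, pe))
    label := N.label
    source := ps
    sink := pe }

/-- The partial-order projection poproject(N, T'). -/
def poproject (N : Net) (T' : Finset ℕ) : Net :=
  let R := poprojectRaw N T'
  Normalize R R.source R.sink

/-- The raw choice-graph projection of N onto a part T' (before normalization). -/
def cgprojectRaw (N : Net) (T' : Finset ℕ) : Net :=
  let keptP := N.adjP T'
  { places := keptP
    transitions := T'
    flow := N.flow.filter fun e => (e.1 ∈ keptP ∧ e.2 ∈ T') ∨ (e.1 ∈ T' ∧ e.2 ∈ keptP)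
    label := N.label
    source := (N.entry T').sup id
    sink := (N.exit T').sup id }

/-- The choice-graph projection cgproject(N, T'). -/
def cgproject (N : Net) (T' : Finset ℕ) : Net :=
  let R := cgprojectRaw N T'
  Normalize R R.source R.sink

/-- The execution order order(N,G): i ⊏ j iff T_i◦ ∩ ◦T_j ≠ ∅.
(Also the edge relation of the execution flow flow(N,G).) -/
def execOrder (N : Net) {n : ℕ} (G : Fin n → Finset ℕ) (i j : Fin n) : Prop :=
  (N.exit (G i) ∩ N.entry (G j)).Nonempty

/-- Start edges of flow(N,G): parts whose entry points contain the source of N. -/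
def cgStart (N : Net) {n : ℕ} (G : Fin n → Finset ℕ) : Set (Fin n) :=
  { i | N.source ∈ N.entry (G i) }

/-- End edges of flow(N,G): parts whose exit points contain the sink of N. -/
def cgEnd (N : Net) {n : ℕ} (G : Fin n → Finset ℕ) : Set (Fin n) :=
  { i | N.sink ∈ N.exit (G i) }

/-! ### POWL 2.0 models -/

/-- POWL 2.0 models: labeled transitions, partial-order nodes, and
choice-graph nodes.  A choice graph over `Fin n` is represented by the set of
successors of the start node, the set of predecessors of the end node, and the
edge relation between the inner nodes. -/
inductive POWL : Type where
  | ptrans : Option ℕ → POWL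
  | po : (n : ℕ) → (Fin n → Fin n → Prop) → (Fin n → POWL) → POWL
  | cg : (n : ℕ) → Set (Fin n) → Set (Fin n) → (Fin n → Fin n → Prop) → (Fin n → POWL) → POWL

/-- `p` is a path of a choice graph: nonempty, it starts at a successor of the
start node, ends at a predecessor of the end node, and follows edges. -/
def CGPath {n : ℕ} (sE eE : Set (Fin n)) (ed : Fin n → Fin n → Prop) (p : List (Fin n)) : Prop :=
  ∃ h : p ≠ [], p.head h ∈ sE ∧ p.getLast h ∈ eE ∧ p.Chain' ed

/-- Validity of a choice graph: start is the unique node with no incoming edge,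
end is the unique node with no outgoing edge, and every node lies on a directed
path from start to end. -/
def IsChoiceGraph {n : ℕ} (sE eE : Set (Fin n)) (ed : Fin n → Fin n → Prop) : Prop :=
  sE.Nonempty ∧ eE.Nonempty ∧
  (∀ i, i ∈ sE ∨ ∃ j, ed j i) ∧
  (∀ i, i ∈ eE ∨ ∃ j, ed i j) ∧
  (∀ i, ∃ p, CGPath sE eE ed p ∧ i ∈ p)

/-- σ is an order-preserving shuffle of the sequences `f 0, …, f (n-1)` w.r.t. `rel`. -/
def IsShuffle {n : ℕ} (rel : Fin n → Fin n → Prop) (f : Fin n → List ℕ) (σ : List ℕ) : Prop :=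
  ∃ w : List (Fin n × ℕ),
    σ = w.map Prod.snd ∧
    (∀ i, (w.filter fun x => x.1 = i).map Prod.snd = f i) ∧
    ∀ a b : Fin w.length, rel (w.get a).1 (w.get b).1 → (a : ℕ) < (b : ℕ)

/-- Concatenation of a list of languages. -/
def ConcatLangs : List (Set (List ℕ)) → Set (List ℕ)
  | [] => {[]}
  | L :: Ls => { σ | ∃ u v, u ∈ L ∧ v ∈ ConcatLangs Ls ∧ σ = u ++ v }

/-- The language of a POWL 2.0 model. -/
def POWL.lang : POWL → Set (List ℕ)
  | .ptrans none => {[]}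
  | .ptrans (some a) => {[a]}
  | .po n rel ch => { σ | ∃ f : Fin n → List ℕ, (∀ i, f i ∈ (ch i).lang) ∧ IsShuffle rel f σ }
  | .cg n sE eE ed ch =>
      { σ | ∃ p, CGPath sE eE ed p ∧ σ ∈ ConcatLangs (p.map fun i => (ch i).lang) }

/-- Well-formedness of a POWL 2.0 model: partial-order nodes carry strict
partial orders over at least two children, choice-graph nodes carry valid
choice graphs over at least two children. -/
def POWL.WF : POWL → Prop
  | .ptrans _ => True
  | .po n rel ch => 2 ≤ n ∧ Irreflexive rel ∧ Transitive rel ∧ ∀ i, (ch i).WF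
  | .cg n sE eE ed ch => 2 ≤ n ∧ IsChoiceGraph sE eE ed ∧ ∀ i, (ch i).WF

/-! ### The conversion algorithm -/

/-- Transition-to-node reachability via the transitive closure of the flow. -/
def ttr (N : Net) (a b : ℕ) : Prop := Relation.TransGen (fun x y => (x, y) ∈ N.flow) a b

/-- The merge group of an XOR-split place p in popart. -/
def poSplitGroup (N : Net) (p : ℕ) : Finset ℕ :=
  N.transitions.filter fun t => ∃ t₁ ∈ N.post p, ∃ t₂ ∈ N.post p, ttr N t₁ t ∧ ¬ ttr N t₂ t

/-- The merge group of an XOR-join place p in popart. -/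
def poJoinGroup (N : Net) (p : ℕ) : Finset ℕ :=
  N.transitions.filter fun t => ∃ t₁ ∈ N.pre p, ∃ t₂ ∈ N.pre p, ttr N t t₁ ∧ ¬ ttr N t t₂

/-- Transitions related by some merge step of popart. -/
def popartRel (N : Net) (t t' : ℕ) : Prop :=
  ∃ p ∈ N.places,
    (1 < (N.post p).card ∧ t ∈ poSplitGroup N p ∧ t' ∈ poSplitGroup N p) ∨
    (1 < (N.pre p).card ∧ t ∈ poJoinGroup N p ∧ t' ∈ poJoinGroup N p)

/-- The part of popart(N) containing t: the equivalence class of t under the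
equivalence closure of all popart merge steps. -/
def popartClass (N : Net) (t : ℕ) : Finset ℕ :=
  N.transitions.filter fun t' => Relation.EqvGen (popartRel N) t t'

/-- `G` enumerates the partition popart(N). -/
def IsPopart (N : Net) {n : ℕ} (G : Fin n → Finset ℕ) : Prop :=
  (∀ i, ∃ t ∈ N.transitions, G i = popartClass N t) ∧
  (∀ t ∈ N.transitions, ∃ i, t ∈ G i) ∧
  Function.Injective G

/-- Forward restricted reachability: t is reachable from place p via a path avoiding t_stop. -/
def reachAvoid (N : Net) (tstop p t : ℕ) : Prop :=
  ∃ q, Relation.ReflTransGen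
        (fun a b => ∃ u, u ≠ tstop ∧ (a, u) ∈ N.flow ∧ (u, b) ∈ N.flow) p q ∧
    t ≠ tstop ∧ (q, t) ∈ N.flow

/-- Backward restricted reachability: place p is reachable from t via a path avoiding t_stop. -/
def backReachAvoid (N : Net) (tstop p t : ℕ) : Prop :=
  ∃ q, t ≠ tstop ∧ (t, q) ∈ N.flow ∧
    Relation.ReflTransGen
      (fun a b => ∃ u, u ≠ tstop ∧ (a, u) ∈ N.flow ∧ (u, b) ∈ N.flow) q p

/-- The merge group of an AND-split transition in cgpart. -/
def cgSplitGroup (N : Net) (ts : ℕ) : Finset ℕ :=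
  {ts} ∪ (N.transitions.filter fun t =>
    ∃ p₁ ∈ N.post ts, ∃ p₂ ∈ N.post ts, reachAvoid N ts p₁ t ∧ ¬ reachAvoid N ts p₂ t)

/-- The merge group of an AND-join transition in cgpart. -/
def cgJoinGroup (N : Net) (tj : ℕ) : Finset ℕ :=
  {tj} ∪ (N.transitions.filter fun t =>
    ∃ p₁ ∈ N.pre tj, ∃ p₂ ∈ N.pre tj, backReachAvoid N tj p₁ t ∧ ¬ backReachAvoid N tj p₂ t)

/-- Transitions related by some merge step of cgpart. -/
def cgpartRel (N : Net) (t t' : ℕ) : Prop :=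
  ∃ u ∈ N.transitions,
    (1 < (N.post u).card ∧ t ∈ cgSplitGroup N u ∧ t' ∈ cgSplitGroup N u) ∨
    (1 < (N.pre u).card ∧ t ∈ cgJoinGroup N u ∧ t' ∈ cgJoinGroup N u)

/-- The part of cgpart(N) containing t. -/
def cgpartClass (N : Net) (t : ℕ) : Finset ℕ :=
  N.transitions.filter fun t' => Relation.EqvGen (cgpartRel N) t t'

/-- `G` enumerates the partition cgpart(N). -/
def IsCgpart (N : Net) {n : ℕ} (G : Fin n → Finset ℕ) : Prop :=
  (∀ i, ∃ t ∈ N.transitions, G i = cgpartClass N t) ∧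
  (∀ t ∈ N.transitions, ∃ i, t ∈ G i) ∧
  Function.Injective G

/-- Isomorphism of labeled Petri nets. -/
def NetIso (N₁ N₂ : Net) : Prop :=
  ∃ fP fT : ℕ → ℕ,
    Set.BijOn fP ↑N₁.places ↑N₂.places ∧
    Set.BijOn fT ↑N₁.transitions ↑N₂.transitions ∧
    (∀ p ∈ N₁.places, ∀ t ∈ N₁.transitions,
      ((p, t) ∈ N₁.flow ↔ (fP p, fT t) ∈ N₂.flow) ∧
      ((t, p) ∈ N₁.flow ↔ (fT t, fP p) ∈ N₂.flow)) ∧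
    (∀ t ∈ N₁.transitions, N₁.label t = N₂.label (fT t))

/-- The partial-order decomposition step of the algorithm applies to N. -/
def PoStepApplies (N : Net) : Prop :=
  ∃ (n : ℕ) (G : Fin n → Finset ℕ),
    IsPopart N G ∧ 2 ≤ n ∧ ConflictHiding N G ∧ ∀ i, ¬ NetIso (poproject N (G i)) N

/-- `Converts N ψ`: the algorithm ConvertNetToPOWL converts the WF-net N into
the POWL model ψ without invoking the fall-through at any level of recursion. -/
inductive Converts : Net → POWL → Prop where
  | base (N : Net) (t : ℕ) :
      N.transitions = {t} → N.places = {N.source, N.sink} →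
      N.flow = {(N.source, t), (t, N.sink)} →
      Converts N (POWL.ptrans (N.label t))
  | poCase (N : Net) (n : ℕ) (G : Fin n → Finset ℕ) (ψ : Fin n → POWL) :
      IsPopart N G → 2 ≤ n → ConflictHiding N G →
      (∀ i, ¬ NetIso (poproject N (G i)) N) →
      (∀ i, Converts (poproject N (G i)) (ψ i)) →
      Converts N (POWL.po n (Relation.TransGen (execOrder N G)) ψ)
  | cgCase (N : Net) (n : ℕ) (G : Fin n → Finset ℕ) (ψ : Fin n → POWL) :
      ¬ PoStepApplies N →
      IsCgpart N G → 2 ≤ n → ConcurrencyHiding N G →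
      (∀ i, ¬ NetIso (cgproject N (G i)) N) →
      (∀ i, Converts (cgproject N (G i)) (ψ i)) →
      Converts N (POWL.cg n (cgStart N G) (cgEnd N G) (execOrder N G) ψ)

/-! ### Separable WF-nets -/

/-- The nets N and N' share no nodes. -/
def NodeDisjoint (N N' : Net) : Prop :=
  Disjoint (N.places ∪ N.transitions) (N'.places ∪ N'.transitions)

/-- The substitutive composition N_[t → N']. -/
def subst (N : Net) (t : ℕ) (N' : Net) : Net where
  places := N.places ∪ (N'.places \ {N'.source, N'.sink})
  transitions := (N.transitions \ {t}) ∪ N'.transitions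
  flow :=
    (N.flow.filter fun e => e.1 ≠ t ∧ e.2 ≠ t) ∪
    (N'.flow.filter fun e => e.1 ≠ N'.source ∧ e.2 ≠ N'.sink) ∪
    ((N.pre t) ×ˢ (N'.post N'.source)) ∪
    ((N'.pre N'.sink) ×ˢ (N.post t))
  label := fun x => if x ∈ N'.transitions then N'.label x else N.label x
  source := N.source
  sink := N.sink

/-- State machine: every transition has at most one input and one output place. -/
def IsStateMachine (N : Net) : Prop :=
  ∀ t ∈ N.transitions, (N.pre t).card ≤ 1 ∧ (N.post t).card ≤ 1

/-- Marked graph: every place has at most one input and one output transition. -/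
def IsMarkedGraph (N : Net) : Prop :=
  ∀ p ∈ N.places, (N.pre p).card ≤ 1 ∧ (N.post p).card ≤ 1

/-- The class of separable WF-nets. -/
inductive Separable : Net → Prop where
  | mg (N : Net) : N.IsWF → IsMarkedGraph N → Separable N
  | sm (N : Net) : N.IsWF → IsStateMachine N → Separable N
  | comp (N N' : Net) (t : ℕ) :
      Separable N → Separable N' → t ∈ N.transitions → NodeDisjoint N N' →
      Separable (subst N t N')

/-- Free-choice Petri net. -/
def FreeChoice (N : Net) : Prop :=
  ∀ t₁ ∈ N.transitions, ∀ t₂ ∈ N.transitions,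
    (N.pre t₁ ∩ N.pre t₂).Nonempty → N.pre t₁ = N.pre t₂

/-- A directed path in a Petri net: consecutive nodes are connected by the flow. -/
def DirPath (N : Net) (l : List ℕ) : Prop := l.Chain' fun a b => (a, b) ∈ N.flow

section Aux

lemma mem_pre' {N : Net} {p x : ℕ} : p ∈ N.pre x ↔ (p, x) ∈ N.flow := by
  simp [Net.pre]

lemma mem_post' {N : Net} {p x : ℕ} : p ∈ N.post x ↔ (x, p) ∈ N.flow := by
  simp [Net.post]

lemma pre_place {N : Net} (hP : N.IsPetri) {p u : ℕ} (hu : u ∈ N.transitions)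
    (h : (p, u) ∈ N.flow) : p ∈ N.places := by
  rcases hP.2 _ h with ⟨h1, _⟩ | ⟨_, h2⟩
  · exact h1
  · exact absurd hu (Finset.disjoint_left.mp hP.1 h2)

/-- No edges enter the source of a WF-net. -/
lemma no_into_source {N' : Net} (hWF' : N'.IsWF) (y : ℕ) : (y, N'.source) ∉ N'.flow := by
  intro h
  have hempty : N'.pre N'.source = ∅ :=
    (hWF'.2.2.2.1 N'.source hWF'.2.1).mpr rfl
  have : y ∈ N'.pre N'.source := mem_pre'.mpr h
  rw [hempty] at this
  exact absurd this (Finset.notMem_empty y)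

/-- Every transition of a WF-net has a nonempty pre-set. -/
lemma pre_trans_nonempty {N' : Net} (hWF' : N'.IsWF) {u : ℕ} (hu : u ∈ N'.transitions) :
    (N'.pre u).Nonempty := by
  have hpath := (hWF'.2.2.2.2.2 u (Finset.mem_union_right _ hu)).1
  have hne : u ≠ N'.source := by
    intro h
    exact absurd hu (Finset.disjoint_left.mp hWF'.1.1 (h ▸ hWF'.2.1))
  rcases hpath.cases_tail with h | ⟨c, _, hc⟩
  · exact absurd h hne
  · exact ⟨c, mem_pre'.mpr hc⟩

lemma seq_source_zero {N' : Net} (hWF' : N'.IsWF) :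
    ∀ σ (M M' : Marking), N'.firingSeq M σ M' → M N'.source = 0 → M' N'.source = 0 := by
  intro σ
  induction σ with
  | nil => intro M M' h h0; rw [show M' = M from h]; exact h0
  | cons a σ ih =>
    rintro M M' ⟨M₁, hf, hrest⟩ h0
    apply ih M₁ M' hrest
    have h2 := hf.2 N'.source
    have hnp : N'.source ∉ N'.post a := fun h => no_into_source hWF' a (mem_post'.mp h)
    rw [if_neg hnp] at h2
    by_cases hp : N'.source ∈ N'.pre a <;> simp [hp] at h2 <;> omega

lemma reach_source_init {N' : Net} (hWF' : N'.IsWF) {M : Marking}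
    (h : N'.reachable N'.initM M) (hM : 1 ≤ M N'.source) : M = N'.initM := by
  obtain ⟨σ, hσ⟩ := h
  cases σ with
  | nil => exact hσ
  | cons a σ' =>
    exfalso
    obtain ⟨M₁, hf, hrest⟩ := hσ
    obtain ⟨p, hp⟩ := pre_trans_nonempty hWF' hf.1.1
    have h1 := hf.1.2 p hp
    have hps : p = N'.source := by
      by_contra hne
      simp [Net.initM, hne] at h1
    have hsrc : N'.source ∈ N'.pre a := hps ▸ hp
    have h2 := hf.2 N'.source
    have hnp : N'.source ∉ N'.post a := fun hh => no_into_source hWF' a (mem_post'.mp hh)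
    rw [if_pos hsrc, if_neg hnp, Net.initM] at h2
    simp at h2
    have hM0 : M₁ N'.source = 0 := by omega
    have := seq_source_zero hWF' σ' M₁ M hrest hM0
    omega

/-- In a sound WF-net, a transition consuming from the source has pre-set {source}. -/
lemma pre_eq_source {N' : Net} (hWF' : N'.IsWF) (hsound' : N'.Sound)
    {u : ℕ} (hu : u ∈ N'.transitions) (hs : (N'.source, u) ∈ N'.flow) :
    N'.pre u = {N'.source} := by
  obtain ⟨M, hr, hen⟩ := hsound'.1 u hu
  have hsrc : N'.source ∈ N'.pre u := mem_pre'.mpr hs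
  have hM : M = N'.initM := reach_source_init hWF' hr (hen.2 _ hsrc)
  apply Finset.eq_singleton_iff_unique_mem.mpr
  refine ⟨hsrc, fun p hp => ?_⟩
  have := hen.2 p hp
  rw [hM] at this
  by_contra hne
  simp [Net.initM, hne] at this

lemma mem_flow_subst {N N' : Net} {t p x : ℕ} :
    (p, x) ∈ (subst N t N').flow ↔
      ((p, x) ∈ N.flow ∧ p ≠ t ∧ x ≠ t) ∨
      ((p, x) ∈ N'.flow ∧ p ≠ N'.source ∧ x ≠ N'.sink) ∨
      (p ∈ N.pre t ∧ x ∈ N'.post N'.source) ∨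
      (p ∈ N'.pre N'.sink ∧ x ∈ N.post t) := by
  simp [subst, Finset.mem_union, Finset.mem_filter, Finset.mem_product]

end Aux

/-- Substituting a sound free-choice WF-net for a transition
of a free-choice Petri net yields a free-choice Petri net. -/
theorem subst_free_choice
    (N : Net) (hP : N.IsPetri) (hfc : FreeChoice N) (t : ℕ) (ht : t ∈ N.transitions)
    (N' : Net) (hWF' : N'.IsWF) (hsound' : N'.Sound) (hfc' : FreeChoice N')
    (hdisj : NodeDisjoint N N') :
    FreeChoice (subst N t N') := by
  have hndN : ∀ {a b : ℕ}, (a, b) ∈ N.flow →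
      a ∈ N.places ∪ N.transitions ∧ b ∈ N.places ∪ N.transitions := by
    intro a b h
    rcases hP.2 _ h with ⟨h1, h2⟩ | ⟨h1, h2⟩ <;> exact ⟨by simp [h1], by simp [h2]⟩
  have hndN' : ∀ {a b : ℕ}, (a, b) ∈ N'.flow →
      a ∈ N'.places ∪ N'.transitions ∧ b ∈ N'.places ∪ N'.transitions := by
    intro a b h
    rcases hWF'.1.2 _ h with ⟨h1, h2⟩ | ⟨h1, h2⟩ <;> exact ⟨by simp [h1], by simp [h2]⟩
  have hdis : ∀ {x : ℕ}, x ∈ N.places ∪ N.transitions → x ∉ N'.places ∪ N'.transitions :=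
    fun hx => Finset.disjoint_left.mp hdisj hx
  have post_t_place : ∀ {x : ℕ}, x ∈ N.post t → x ∈ N.places := by
    intro x hx
    rcases hP.2 _ (mem_post'.mp hx) with ⟨h1, _⟩ | ⟨_, h2⟩
    · exact absurd ht (Finset.disjoint_left.mp hP.1 h1)
    · exact h2
  -- pre-set of a transition of N other than t
  have preA : ∀ u ∈ N.transitions, u ≠ t → (subst N t N').pre u = N.pre u := by
    intro u hu hut
    ext p
    rw [mem_pre', mem_flow_subst]
    constructor
    · rintro (⟨h, _, _⟩ | ⟨h, _, _⟩ | ⟨_, h⟩ | ⟨_, h⟩)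
      · exact mem_pre'.mpr h
      · exact absurd (hndN' h).2 (hdis (Finset.mem_union_right _ hu))
      · exact absurd (hndN' (mem_post'.mp h)).2 (hdis (Finset.mem_union_right _ hu))
      · exact absurd hu (Finset.disjoint_left.mp hP.1 (post_t_place h))
    · intro h
      refine Or.inl ⟨mem_pre'.mp h, ?_, hut⟩
      intro hpt
      exact absurd ht (Finset.disjoint_left.mp hP.1 (hpt ▸ pre_place hP hu (mem_pre'.mp h)))
  -- pre-set of an initial transition of N'
  have preB1 : ∀ u ∈ N'.transitions, (N'.source, u) ∈ N'.flow →
      (subst N t N').pre u = N.pre t := by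
    intro u hu hs
    have hpre := pre_eq_source hWF' hsound' hu hs
    ext p
    rw [mem_pre', mem_flow_subst]
    constructor
    · rintro (⟨h, _, _⟩ | ⟨h, hps, _⟩ | ⟨hp, _⟩ | ⟨_, h⟩)
      · exact absurd (Finset.mem_union_right _ hu) (hdis (hndN h).2)
      · have : p ∈ N'.pre u := mem_pre'.mpr h
        rw [hpre] at this
        simp at this
        exact absurd this hps
      · exact hp
      · exact absurd (Finset.mem_union_right _ hu) (hdis (hndN (mem_post'.mp h)).2)
    · intro hp
      exact Or.inr (Or.inr (Or.inl ⟨hp, mem_post'.mpr hs⟩))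
  -- pre-set of a non-initial transition of N'
  have preB2 : ∀ u ∈ N'.transitions, (N'.source, u) ∉ N'.flow →
      (subst N t N').pre u = N'.pre u := by
    intro u hu hs
    ext p
    rw [mem_pre', mem_flow_subst]
    constructor
    · rintro (⟨h, _, _⟩ | ⟨h, _, _⟩ | ⟨_, h⟩ | ⟨_, h⟩)
      · exact absurd (Finset.mem_union_right _ hu) (hdis (hndN h).2)
      · exact mem_pre'.mpr h
      · exact absurd (mem_post'.mp h) hs
      · exact absurd (Finset.mem_union_right _ hu) (hdis (hndN (mem_post'.mp h)).2)
    · intro h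
      refine Or.inr (Or.inl ⟨mem_pre'.mp h, ?_, ?_⟩)
      · intro hps
        exact hs (hps ▸ mem_pre'.mp h)
      · intro husk
        exact absurd hu (Finset.disjoint_left.mp hWF'.1.1 (husk ▸ hWF'.2.2.1))
  -- cross intersections between places of N and N' are empty
  have cross : ∀ {u v : ℕ}, u ∈ N.transitions → v ∈ N'.transitions →
      (N.pre u ∩ N'.pre v).Nonempty → False := by
    rintro u v hu hv ⟨p, hp⟩
    rw [Finset.mem_inter] at hp
    have hp1 : p ∈ N.places := pre_place hP hu (mem_pre'.mp hp.1)
    have hp2 : p ∈ N'.places := pre_place hWF'.1 hv (mem_pre'.mp hp.2)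
    exact hdis (Finset.mem_union_left _ hp1) (Finset.mem_union_left _ hp2)
  intro t₁ ht₁ t₂ ht₂ hint
  have ht₁' : (t₁ ∈ N.transitions ∧ t₁ ≠ t) ∨ t₁ ∈ N'.transitions := by
    simpa [subst, Finset.mem_union, Finset.mem_sdiff] using ht₁
  have ht₂' : (t₂ ∈ N.transitions ∧ t₂ ≠ t) ∨ t₂ ∈ N'.transitions := by
    simpa [subst, Finset.mem_union, Finset.mem_sdiff] using ht₂
  rcases ht₁' with ⟨h1N, h1t⟩ | h1N'
  · rw [preA t₁ h1N h1t] at hint ⊢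
    rcases ht₂' with ⟨h2N, h2t⟩ | h2N'
    · rw [preA t₂ h2N h2t] at hint ⊢
      exact hfc _ h1N _ h2N hint
    · by_cases hs : (N'.source, t₂) ∈ N'.flow
      · rw [preB1 t₂ h2N' hs] at hint ⊢
        exact hfc _ h1N _ ht hint
      · rw [preB2 t₂ h2N' hs] at hint
        exact absurd hint (fun h => cross h1N h2N' h)
  · rcases ht₂' with ⟨h2N, h2t⟩ | h2N'
    · rw [preA t₂ h2N h2t] at hint ⊢
      by_cases hs : (N'.source, t₁) ∈ N'.flow
      · rw [preB1 t₁ h1N' hs] at hint ⊢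
        exact hfc _ ht _ h2N hint
      · rw [preB2 t₁ h1N' hs] at hint
        rw [Finset.inter_comm] at hint
        exact absurd hint (fun h => cross h2N h1N' h)
    · by_cases hs1 : (N'.source, t₁) ∈ N'.flow <;>
        by_cases hs2 : (N'.source, t₂) ∈ N'.flow
      · rw [preB1 t₁ h1N' hs1, preB1 t₂ h2N' hs2]
      · rw [preB1 t₁ h1N' hs1, preB2 t₂ h2N' hs2] at hint
        exact absurd hint (fun h => cross ht h2N' h)
      · rw [preB2 t₁ h1N' hs1, preB1 t₂ h2N' hs2] at hint
        rw [Finset.inter_comm] at hint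
        exact absurd hint (fun h => cross ht h1N' h)
      · rw [preB2 t₁ h1N' hs1, preB2 t₂ h2N' hs2] at hint ⊢
        exact hfc' _ h1N' _ h2N' hint

end
end

section
/- Let N = (P,T,F) be a safe and sound WF-net, let G = {T_1,…,T_n} be a conflict-hiding partition of T, and let ⊏ be the transitive closure of the execution order order(N,G). If i ⊏ j, then in every firing sequence of N leading from the marking [source] to the marking [sink], every firing of a transition of T_i occurs before every firing of a transition of T_j. -/
/-!
Common formalization of Petri nets, workflow nets (WF-nets), POWL 2.0 models,
and the WF-net-to-POWL conversion algorithm.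
-/

noncomputable section
attribute [local instance] Classical.propDecidable

/-! ### Auxiliary infrastructure for Statement 14 -/

section Statement14

open Finset

namespace PN

lemma mem_pre_iff (N : Net) {x y : ℕ} : x ∈ N.pre y ↔ (x, y) ∈ N.flow := by
  unfold Net.pre
  simp only [Finset.mem_image, Finset.mem_filter]
  constructor
  · rintro ⟨⟨a, b⟩, ⟨hf, hb⟩, ha⟩
    simp only at ha hb
    subst ha; subst hb; exact hf
  · intro h; exact ⟨(x, y), ⟨h, rfl⟩, rfl⟩

lemma mem_post_iff (N : Net) {x y : ℕ} : y ∈ N.post x ↔ (x, y) ∈ N.flow := by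
  unfold Net.post
  simp only [Finset.mem_image, Finset.mem_filter]
  constructor
  · rintro ⟨⟨a, b⟩, ⟨hf, hb⟩, ha⟩
    simp only at ha hb
    subst ha; subst hb; exact hf
  · intro h; exact ⟨(x, y), ⟨h, rfl⟩, rfl⟩

/-- Deterministic firing function. -/
def step (N : Net) (t : ℕ) (M : Marking) : Marking :=
  fun p => M p + (if p ∈ N.post t then 1 else 0) - (if p ∈ N.pre t then 1 else 0)

lemma fire_eq_step {N : Net} {t : ℕ} {M M' : Marking} (h : N.fire t M M') :
    M' = PN.step N t M := by
  funext p
  have h2 := h.2 p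
  unfold PN.step
  split_ifs at h2 ⊢ <;> omega

lemma fire_step {N : Net} {t : ℕ} {M : Marking} (h : N.enabled t M) :
    N.fire t M (PN.step N t M) := by
  refine ⟨h, fun p => ?_⟩
  show PN.step N t M p + _ = _
  unfold PN.step
  by_cases hpre : p ∈ N.pre t
  · have h1 : 1 ≤ M p := h.2 p hpre
    split_ifs <;> omega
  · split_ifs <;> omega

lemma fs_cons {N : Net} {t : ℕ} {σ : List ℕ} {M M' : Marking} :
    N.firingSeq M (t :: σ) M' ↔ ∃ M₁, N.fire t M M₁ ∧ N.firingSeq M₁ σ M' := Iff.rfl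

lemma fs_append {N : Net} {σ₁ σ₂ : List ℕ} {M M₂ : Marking} :
    N.firingSeq M (σ₁ ++ σ₂) M₂ ↔ ∃ M₁, N.firingSeq M σ₁ M₁ ∧ N.firingSeq M₁ σ₂ M₂ := by
  induction σ₁ generalizing M with
  | nil =>
    constructor
    · intro h; exact ⟨M, rfl, h⟩
    · rintro ⟨M₁, h1, h2⟩
      have he : M₁ = M := h1
      rwa [he] at h2
  | cons t σ ih =>
    simp only [List.cons_append, fs_cons, ih]
    constructor
    · rintro ⟨Ma, hf, Mb, h1, h2⟩; exact ⟨Mb, ⟨Ma, hf, h1⟩, h2⟩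
    · rintro ⟨Mb, ⟨Ma, hf, h1⟩, h2⟩; exact ⟨Ma, hf, Mb, h1, h2⟩

/-- Marking after a list of firings. -/
def mark (N : Net) : Marking → List ℕ → Marking
  | M, [] => M
  | M, t :: σ => mark N (PN.step N t M) σ

lemma fs_mark {N : Net} {σ : List ℕ} {M M' : Marking} (h : N.firingSeq M σ M') :
    M' = PN.mark N M σ := by
  induction σ generalizing M with
  | nil => exact h
  | cons t σ ih =>
    obtain ⟨M₁, hf, hs⟩ := h
    rw [fire_eq_step hf] at hs
    exact ih hs

/-- Marking just before position `n` of the run. -/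
def Mk (N : Net) (σ : List ℕ) (n : ℕ) : Marking := PN.mark N N.initM (σ.take n)

/-- Transition at position `n` of the run. -/
def tr (σ : List ℕ) (n : ℕ) : ℕ := σ.getD n 0

variable {N : Net} {σ : List ℕ}

lemma fs_take (hσ : N.firingSeq N.initM σ N.finalM) (m : ℕ) :
    N.firingSeq N.initM (σ.take m) (Mk N σ m) := by
  have h : N.firingSeq N.initM (σ.take m ++ σ.drop m) N.finalM := by
    rw [List.take_append_drop]; exact hσ
  obtain ⟨M₁, h1, _⟩ := fs_append.mp h
  rwa [fs_mark h1] at h1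

lemma reach_Mk (hσ : N.firingSeq N.initM σ N.finalM) (m : ℕ) :
    N.reachable N.initM (Mk N σ m) := ⟨σ.take m, fs_take hσ m⟩

lemma Mk_final (hσ : N.firingSeq N.initM σ N.finalM) : Mk N σ σ.length = N.finalM := by
  have := fs_mark hσ
  unfold Mk
  rw [List.take_length]
  exact this.symm

lemma fire_at (hσ : N.firingSeq N.initM σ N.finalM) {m : ℕ} (hm : m < σ.length) :
    N.fire (tr σ m) (Mk N σ m) (Mk N σ (m + 1)) := by
  have hts : σ.take (m + 1) = σ.take m ++ [tr σ m] := by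
    rw [List.take_succ]
    congr 1
    rw [List.getElem?_eq_getElem hm]
    simp [tr, List.getD_eq_getElem?_getD, List.getElem?_eq_getElem hm]
  have h := fs_take hσ (m + 1)
  rw [hts] at h
  obtain ⟨M₁, h1, h2⟩ := fs_append.mp h
  have he : M₁ = Mk N σ m := fs_mark h1
  rw [he] at h2
  obtain ⟨M₂, hf, h3⟩ := h2
  have he2 : Mk N σ (m + 1) = M₂ := h3
  rwa [← he2] at hf

lemma tr_trans (hσ : N.firingSeq N.initM σ N.finalM) {m : ℕ} (hm : m < σ.length) :
    tr σ m ∈ N.transitions := (fire_at hσ hm).1.1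

lemma tr_enabled (hσ : N.firingSeq N.initM σ N.finalM) {m : ℕ} (hm : m < σ.length)
    {q : ℕ} (hq : (q, tr σ m) ∈ N.flow) : 1 ≤ Mk N σ m q :=
  (fire_at hσ hm).1.2 q ((mem_pre_iff N).mpr hq)

lemma val_rec (hσ : N.firingSeq N.initM σ N.finalM) {m : ℕ} (hm : m < σ.length) (q : ℕ) :
    Mk N σ (m + 1) q + (if q ∈ N.pre (tr σ m) then 1 else 0)
      = Mk N σ m q + (if q ∈ N.post (tr σ m) then 1 else 0) :=
  (fire_at hσ hm).2 q

lemma Mk_zero (q : ℕ) : Mk N σ 0 q = if q = N.source then 1 else 0 := rfl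

/-- Every token was produced by an earlier firing, or sits on the source. -/
lemma token_src (hσ : N.firingSeq N.initM σ N.finalM) :
    ∀ n, n ≤ σ.length → ∀ q, 1 ≤ Mk N σ n q →
      q = N.source ∨ ∃ z, z < n ∧ (tr σ z, q) ∈ N.flow := by
  intro n
  induction n with
  | zero =>
    intro _ q h
    by_cases hq : q = N.source
    · exact Or.inl hq
    · rw [Mk_zero, if_neg hq] at h; omega
  | succ m ih =>
    intro hlen q h
    have hm : m < σ.length := lt_of_lt_of_le (Nat.lt_succ_self m) hlen
    by_cases hpost : q ∈ N.post (tr σ m)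
    · exact Or.inr ⟨m, Nat.lt_succ_self m, (mem_post_iff N).mp hpost⟩
    · have hrec := val_rec hσ hm q
      rw [if_neg hpost] at hrec
      have h1 : 1 ≤ Mk N σ m q := by split_ifs at hrec <;> omega
      rcases ih (le_of_lt hm) q h1 with h | ⟨z, hz, hf⟩
      · exact Or.inl h
      · exact Or.inr ⟨z, Nat.lt_succ_of_lt hz, hf⟩

/-- Every token on a non-sink place is eventually consumed. -/
lemma token_sink (hσ : N.firingSeq N.initM σ N.finalM) {q : ℕ} (hq : q ≠ N.sink) :
    ∀ k n, σ.length - n ≤ k → n ≤ σ.length → 1 ≤ Mk N σ n q →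
      ∃ c, n ≤ c ∧ c < σ.length ∧ (q, tr σ c) ∈ N.flow := by
  intro k
  induction k with
  | zero =>
    intro n hk hn h
    have hnl : n = σ.length := by omega
    rw [hnl, Mk_final hσ] at h
    unfold Net.finalM at h
    rw [if_neg hq] at h
    omega
  | succ k ih =>
    intro n hk hn h
    rcases Nat.lt_or_ge n σ.length with hlt | hge
    · by_cases hpre : q ∈ N.pre (tr σ n)
      · exact ⟨n, le_refl n, hlt, (mem_pre_iff N).mp hpre⟩
      · have hrec := val_rec hσ hlt q
        rw [if_neg hpre] at hrec
        have h1 : 1 ≤ Mk N σ (n + 1) q := by split_ifs at hrec <;> omega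
        obtain ⟨c, hc1, hc2, hc3⟩ := ih (n + 1) (by omega) (by omega) h1
        exact ⟨c, by omega, hc2, hc3⟩
    · have hnl : n = σ.length := le_antisymm hn hge
      rw [hnl, Mk_final hσ] at h
      unfold Net.finalM at h
      rw [if_neg hq] at h
      omega

/-- A place holding no token stays empty while nothing produces into it. -/
lemma zero_persist (hσ : N.firingSeq N.initM σ N.finalM) {q : ℕ} :
    ∀ a b, a ≤ b → b ≤ σ.length → Mk N σ a q = 0 →
      (∀ z, a ≤ z → z < b → (tr σ z, q) ∉ N.flow) → Mk N σ b q = 0 := by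
  intro a b hab
  induction b, hab using Nat.le_induction with
  | base => intro _ h0 _; exact h0
  | succ b hb ih =>
    intro hblen h0 hnp
    have hbl : b < σ.length := by omega
    have h1 : Mk N σ b q = 0 :=
      ih (by omega) h0 (fun z hz1 hz2 => hnp z hz1 (by omega))
    have hrec := val_rec hσ hbl q
    have hpost : q ∉ N.post (tr σ b) := by
      intro hc
      exact hnp b hb (by omega) ((mem_post_iff N).mp hc)
    rw [if_neg hpost, h1] at hrec
    split_ifs at hrec <;> omega

end PN

end Statement14

namespace PN

variable {N : Net}

lemma place_disj (hWF : N.IsWF) {x : ℕ} (h1 : x ∈ N.places) (h2 : x ∈ N.transitions) :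
    False := (Finset.disjoint_left.mp hWF.1.1) h1 h2

lemma pre_place (hWF : N.IsWF) {q t : ℕ} (ht : t ∈ N.transitions) (h : (q, t) ∈ N.flow) :
    q ∈ N.places := by
  rcases hWF.1.2 (q, t) h with ⟨h1, _⟩ | ⟨_, h2⟩
  · exact h1
  · exact (place_disj hWF h2 ht).elim

lemma post_place (hWF : N.IsWF) {q t : ℕ} (ht : t ∈ N.transitions) (h : (t, q) ∈ N.flow) :
    q ∈ N.places := by
  rcases hWF.1.2 (t, q) h with ⟨h1, _⟩ | ⟨_, h2⟩
  · exact (place_disj hWF h1 ht).elim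
  · exact h2

lemma source_no_pre (hWF : N.IsWF) {z : ℕ} (h : (z, N.source) ∈ N.flow) : False := by
  have h1 : N.pre N.source = ∅ := (hWF.2.2.2.1 N.source hWF.2.1).mpr rfl
  have h2 : z ∈ N.pre N.source := (mem_pre_iff N).mpr h
  rw [h1] at h2
  exact absurd h2 (Finset.notMem_empty z)

lemma ne_sink (hWF : N.IsWF) {q v : ℕ} (hq : q ∈ N.places) (h : (q, v) ∈ N.flow) :
    q ≠ N.sink := by
  intro he
  have h1 : N.post q = ∅ := (hWF.2.2.2.2.1 q hq).mpr he
  have h2 : v ∈ N.post q := (mem_post_iff N).mpr h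
  rw [h1] at h2
  exact absurd h2 (Finset.notMem_empty v)

lemma trans_has_pre (hWF : N.IsWF) {t : ℕ} (ht : t ∈ N.transitions) :
    ∃ q, (q, t) ∈ N.flow := by
  have hpath := (hWF.2.2.2.2.2 t (Finset.mem_union_right _ ht)).1
  rcases hpath.cases_tail with he | ⟨c, _, hc⟩
  · exact (place_disj hWF hWF.2.1 (he ▸ ht)).elim
  · exact ⟨c, hc⟩

lemma trans_has_post (hWF : N.IsWF) {t : ℕ} (ht : t ∈ N.transitions) :
    ∃ q, (t, q) ∈ N.flow := by
  have hpath := (hWF.2.2.2.2.2 t (Finset.mem_union_right _ ht)).2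
  rcases hpath.cases_head with he | ⟨c, hc, _⟩
  · exact (place_disj hWF hWF.2.2.1 (he ▸ ht)).elim
  · exact ⟨c, hc⟩

section Partition

variable {n : ℕ} {G : Fin n → Finset ℕ}

lemma part_subset (hch : ConflictHiding N G) {t : ℕ} {P : Fin n} (h : t ∈ G P) :
    t ∈ N.transitions := by
  rw [← hch.1.2.2]
  exact Finset.mem_biUnion.mpr ⟨P, Finset.mem_univ P, h⟩

lemma part_unique (hch : ConflictHiding N G) {t : ℕ} {P Q : Fin n}
    (h1 : t ∈ G P) (h2 : t ∈ G Q) : P = Q := by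
  by_contra hne
  exact (Finset.disjoint_left.mp (hch.1.2.1 P Q hne)) h1 h2

lemma part_exists (hch : ConflictHiding N G) {t : ℕ} (ht : t ∈ N.transitions) :
    ∃ P, t ∈ G P := by
  rw [← hch.1.2.2] at ht
  obtain ⟨P, _, hP⟩ := Finset.mem_biUnion.mp ht
  exact ⟨P, hP⟩

lemma mem_entry_iff {T' : Finset ℕ} {p : ℕ} :
    p ∈ N.entry T' ↔ p ∈ N.places ∧ (N.post p ∩ T').Nonempty ∧
      (p = N.source ∨ (N.pre p ∩ (N.transitions \ T')).Nonempty) := by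
  unfold Net.entry
  rw [Finset.mem_filter]

lemma mem_exit_iff {T' : Finset ℕ} {p : ℕ} :
    p ∈ N.exit T' ↔ p ∈ N.places ∧ (N.pre p ∩ T').Nonempty ∧
      (p = N.sink ∨ (N.post p ∩ (N.transitions \ T')).Nonempty) := by
  unfold Net.exit
  rw [Finset.mem_filter]

/-- Token flow between different parts follows the execution order. -/
lemma tok_order (hWF : N.IsWF) (hch : ConflictHiding N G) {u q v : ℕ} {P Q : Fin n}
    (hu : u ∈ G P) (hv : v ∈ G Q) (hPQ : P ≠ Q)
    (h1 : (u, q) ∈ N.flow) (h2 : (q, v) ∈ N.flow) : execOrder N G P Q := by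
  have hut : u ∈ N.transitions := part_subset hch hu
  have hvt : v ∈ N.transitions := part_subset hch hv
  have hqp : q ∈ N.places := post_place hWF hut h1
  refine ⟨q, Finset.mem_inter.mpr ⟨?_, ?_⟩⟩
  · rw [mem_exit_iff]
    refine ⟨hqp, ⟨u, Finset.mem_inter.mpr ⟨(mem_pre_iff N).mpr h1, hu⟩⟩, Or.inr ?_⟩
    refine ⟨v, Finset.mem_inter.mpr ⟨(mem_post_iff N).mpr h2, Finset.mem_sdiff.mpr ⟨hvt, ?_⟩⟩⟩
    intro hvP
    exact hPQ (part_unique hch hv hvP).symm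
  · rw [mem_entry_iff]
    refine ⟨hqp, ⟨v, Finset.mem_inter.mpr ⟨(mem_post_iff N).mpr h2, hv⟩⟩, Or.inr ?_⟩
    refine ⟨u, Finset.mem_inter.mpr ⟨(mem_pre_iff N).mpr h1, Finset.mem_sdiff.mpr ⟨hut, ?_⟩⟩⟩
    intro huQ
    exact hPQ (part_unique hch hu huQ)

/-- Producers of a crossing place lie in the two adjacent parts. -/
lemma crossing_pre (hWF : N.IsWF) (hch : ConflictHiding N G) {p : ℕ} {m k : Fin n}
    (hm : p ∈ N.exit (G m)) (hk : p ∈ N.entry (G k))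
    {u : ℕ} (hu : (u, p) ∈ N.flow) (hut : u ∈ N.transitions) : u ∈ G m ∨ u ∈ G k := by
  obtain ⟨P, hP⟩ := part_exists hch hut
  by_cases h1 : P = m
  · exact Or.inl (h1 ▸ hP)
  by_cases h2 : P = k
  · exact Or.inr (h2 ▸ hP)
  exfalso
  obtain ⟨w, hw⟩ := (mem_entry_iff.mp hk).2.1
  have hwk : w ∈ G k := (Finset.mem_inter.mp hw).2
  have hwt : w ∈ N.transitions := part_subset hch hwk
  have hpl : p ∈ N.places := (mem_entry_iff.mp hk).1
  have hPX : p ∈ N.exit (G P) := by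
    rw [mem_exit_iff]
    refine ⟨hpl, ⟨u, Finset.mem_inter.mpr ⟨(mem_pre_iff N).mpr hu, hP⟩⟩, Or.inr ?_⟩
    refine ⟨w, Finset.mem_inter.mpr ⟨(Finset.mem_inter.mp hw).1, Finset.mem_sdiff.mpr ⟨hwt, ?_⟩⟩⟩
    intro hwP
    exact h2 (part_unique hch hwP hwk)
  exact h1 (hch.2.2.1 p P m hPX hm)

/-- Consumers of a crossing place lie in the two adjacent parts. -/
lemma crossing_post (hWF : N.IsWF) (hch : ConflictHiding N G) {p : ℕ} {m k : Fin n}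
    (hm : p ∈ N.exit (G m)) (hk : p ∈ N.entry (G k))
    {v : ℕ} (hv : (p, v) ∈ N.flow) (hvt : v ∈ N.transitions) : v ∈ G m ∨ v ∈ G k := by
  obtain ⟨P, hP⟩ := part_exists hch hvt
  by_cases h1 : P = m
  · exact Or.inl (h1 ▸ hP)
  by_cases h2 : P = k
  · exact Or.inr (h2 ▸ hP)
  exfalso
  obtain ⟨w, hw⟩ := (mem_exit_iff.mp hm).2.1
  have hwm : w ∈ G m := (Finset.mem_inter.mp hw).2
  have hwt : w ∈ N.transitions := part_subset hch hwm
  have hpl : p ∈ N.places := (mem_exit_iff.mp hm).1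
  have hPE : p ∈ N.entry (G P) := by
    rw [mem_entry_iff]
    refine ⟨hpl, ⟨v, Finset.mem_inter.mpr ⟨(mem_post_iff N).mpr hv, hP⟩⟩, Or.inr ?_⟩
    refine ⟨w, Finset.mem_inter.mpr ⟨(Finset.mem_inter.mp hw).1, Finset.mem_sdiff.mpr ⟨hwt, ?_⟩⟩⟩
    intro hwP
    exact h1 (part_unique hch hwP hwm)
  exact h2 (hch.2.1 p P k hPE hk)

/-- If a transition of `T_k` consumes one entry point, it consumes any entry point. -/
lemma entry_consume (hch : ConflictHiding N G) {p p' t : ℕ} {k : Fin n}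
    (hp : p ∈ N.entry (G k)) (hp' : p' ∈ N.entry (G k)) (ht : t ∈ G k)
    (h : (p, t) ∈ N.flow) : (p', t) ∈ N.flow := by
  have he := hch.2.2.2.1 k p hp p' hp'
  have h2 : t ∈ N.post p ∩ G k :=
    Finset.mem_inter.mpr ⟨(mem_post_iff N).mpr h, ht⟩
  rw [he.2] at h2
  exact (mem_post_iff N).mp (Finset.mem_inter.mp h2).1

/-- If a transition of `T_m` produces one exit point, it produces any exit point. -/
lemma exit_produce (hch : ConflictHiding N G) {p p' t : ℕ} {m : Fin n}
    (hp : p ∈ N.exit (G m)) (hp' : p' ∈ N.exit (G m)) (ht : t ∈ G m)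
    (h : (t, p) ∈ N.flow) : (t, p') ∈ N.flow := by
  have he := hch.2.2.2.2 m p hp p' hp'
  have h2 : t ∈ N.pre p ∩ G m :=
    Finset.mem_inter.mpr ⟨(mem_pre_iff N).mpr h, ht⟩
  rw [he.1] at h2
  exact (mem_pre_iff N).mp (Finset.mem_inter.mp h2).1

end Partition

end PN

namespace PN

/-- Positions of the run firing a transition of the given set. -/
def occs (σ : List ℕ) (S : Finset ℕ) : Finset ℕ :=
  (Finset.range σ.length).filter (fun y => tr σ y ∈ S)

lemma occs_lt {σ : List ℕ} {S : Finset ℕ} {y : ℕ} (h : y ∈ occs σ S) : y < σ.length :=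
  Finset.mem_range.mp (Finset.mem_filter.mp h).1

lemma occs_mem {σ : List ℕ} {S : Finset ℕ} {y : ℕ} (h : y ∈ occs σ S) : tr σ y ∈ S :=
  (Finset.mem_filter.mp h).2

lemma mem_occs {σ : List ℕ} {S : Finset ℕ} {y : ℕ} (h1 : y < σ.length) (h2 : tr σ y ∈ S) :
    y ∈ occs σ S := Finset.mem_filter.mpr ⟨Finset.mem_range.mpr h1, h2⟩

variable {N : Net} {σ : List ℕ} {n : ℕ} {G : Fin n → Finset ℕ}

/-- Every input place of the first firing of a part is an entry point of that part. -/
lemma first_in_entries (hWF : N.IsWF) (hch : ConflictHiding N G)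
    (hσ : N.firingSeq N.initM σ N.finalM) {k : Fin n} {f : ℕ}
    (hf : f ∈ occs σ (G k)) (hmin : ∀ y ∈ occs σ (G k), f ≤ y)
    {q : ℕ} (hq : (q, tr σ f) ∈ N.flow) : q ∈ N.entry (G k) := by
  have hflen : f < σ.length := occs_lt hf
  have hfk : tr σ f ∈ G k := occs_mem hf
  have htrans : tr σ f ∈ N.transitions := tr_trans hσ hflen
  have hqpl : q ∈ N.places := pre_place hWF htrans hq
  rw [mem_entry_iff]
  refine ⟨hqpl, ⟨tr σ f, Finset.mem_inter.mpr ⟨(mem_post_iff N).mpr hq, hfk⟩⟩, ?_⟩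
  by_cases hqs : q = N.source
  · exact Or.inl hqs
  right
  have h1 : 1 ≤ Mk N σ f q := tr_enabled hσ hflen hq
  rcases token_src hσ f hflen.le q h1 with h | ⟨z, hz, hzf⟩
  · exact absurd h hqs
  · have hzlen : z < σ.length := hz.trans hflen
    refine ⟨tr σ z, Finset.mem_inter.mpr ⟨(mem_pre_iff N).mpr hzf,
      Finset.mem_sdiff.mpr ⟨tr_trans hσ hzlen, ?_⟩⟩⟩
    intro hzk
    have hzo : z ∈ occs σ (G k) := mem_occs hzlen hzk
    exact absurd (hmin z hzo) (by omega)

/-- The first firing of a part consumes every entry point of that part. -/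
lemma first_consumes (hWF : N.IsWF) (hch : ConflictHiding N G)
    (hσ : N.firingSeq N.initM σ N.finalM) {k : Fin n} {f : ℕ}
    (hf : f ∈ occs σ (G k)) (hmin : ∀ y ∈ occs σ (G k), f ≤ y)
    {p : ℕ} (hp : p ∈ N.entry (G k)) : (p, tr σ f) ∈ N.flow := by
  have hflen : f < σ.length := occs_lt hf
  obtain ⟨q, hq⟩ := trans_has_pre hWF (tr_trans hσ hflen)
  exact entry_consume hch (first_in_entries hWF hch hσ hf hmin hq) hp (occs_mem hf) hq

/-- Every output place of the last firing of a part is an exit point of that part. -/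
lemma last_in_exits (hWF : N.IsWF) (hch : ConflictHiding N G)
    (hσ : N.firingSeq N.initM σ N.finalM) {m : Fin n} {l : ℕ}
    (hl : l ∈ occs σ (G m)) (hmax : ∀ y ∈ occs σ (G m), y ≤ l)
    {q : ℕ} (hq : (tr σ l, q) ∈ N.flow) : q ∈ N.exit (G m) := by
  have hllen : l < σ.length := occs_lt hl
  have hlm : tr σ l ∈ G m := occs_mem hl
  have htrans : tr σ l ∈ N.transitions := tr_trans hσ hllen
  have hqpl : q ∈ N.places := post_place hWF htrans hq
  rw [mem_exit_iff]
  refine ⟨hqpl, ⟨tr σ l, Finset.mem_inter.mpr ⟨(mem_pre_iff N).mpr hq, hlm⟩⟩, ?_⟩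
  by_cases hqs : q = N.sink
  · exact Or.inl hqs
  right
  have h1 : 1 ≤ Mk N σ (l + 1) q := by
    have hrec := val_rec hσ hllen q
    rw [if_pos ((mem_post_iff N).mpr hq)] at hrec
    by_cases hpre : q ∈ N.pre (tr σ l)
    · have := (fire_at hσ hllen).1.2 q hpre
      rw [if_pos hpre] at hrec
      omega
    · rw [if_neg hpre] at hrec
      omega
  obtain ⟨c, hc1, hc2, hc3⟩ := token_sink hσ hqs (σ.length - (l + 1)) (l + 1) le_rfl (by omega) h1
  refine ⟨tr σ c, Finset.mem_inter.mpr ⟨(mem_post_iff N).mpr hc3,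
    Finset.mem_sdiff.mpr ⟨tr_trans hσ hc2, ?_⟩⟩⟩
  intro hcm
  have := hmax c (mem_occs hc2 hcm)
  omega

/-- The last firing of a part produces every exit point of that part. -/
lemma last_produces (hWF : N.IsWF) (hch : ConflictHiding N G)
    (hσ : N.firingSeq N.initM σ N.finalM) {m : Fin n} {l : ℕ}
    (hl : l ∈ occs σ (G m)) (hmax : ∀ y ∈ occs σ (G m), y ≤ l)
    {p : ℕ} (hp : p ∈ N.exit (G m)) : (tr σ l, p) ∈ N.flow := by
  have hllen : l < σ.length := occs_lt hl
  obtain ⟨q, hq⟩ := trans_has_post hWF (tr_trans hσ hllen)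
  exact exit_produce hch (last_in_exits hWF hch hσ hl hmax hq) hp (occs_mem hl) hq

/-- Every transition occurs in some complete run. -/
lemma run_with (hsound : N.Sound) {t : ℕ} (ht : t ∈ N.transitions) :
    ∃ σs : List ℕ, N.firingSeq N.initM σs N.finalM ∧
      ∃ y, y < σs.length ∧ tr σs y = t := by
  obtain ⟨M, ⟨l1, h1⟩, hen⟩ := hsound.1 t ht
  have hf : N.fire t M (PN.step N t M) := fire_step hen
  have h2 : N.firingSeq N.initM (l1 ++ [t]) (PN.step N t M) :=
    fs_append.mpr ⟨M, h1, ⟨_, hf, rfl⟩⟩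
  obtain ⟨l2, h3⟩ := hsound.2.1 _ ⟨_, h2⟩
  refine ⟨l1 ++ t :: l2, fs_append.mpr ⟨M, h1, ⟨_, hf, h3⟩⟩, l1.length, ?_, ?_⟩
  · simp
  · unfold tr
    rw [List.getD_append_right _ _ _ _ le_rfl]
    simp

/-- The execution order of a conflict-hiding partition of a safe and sound
WF-net is acyclic. -/
lemma acyc (hWF : N.IsWF) (hch : ConflictHiding N G) (hsound : N.Sound) :
    ∀ c : Fin n, ¬ Relation.TransGen (execOrder N G) c c := by
  intro c hc
  obtain ⟨t, ht⟩ := hch.1.1 c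
  have htt : t ∈ N.transitions := part_subset hch ht
  obtain ⟨σs, hσs, y0, hy0, hty⟩ := run_with hsound htt
  classical
  set S := (Finset.range σs.length).filter
    (fun y => ∃ P, tr σs y ∈ G P ∧ Relation.TransGen (execOrder N G) c P ∧
      Relation.TransGen (execOrder N G) P c) with hS
  have hSne : S.Nonempty :=
    ⟨y0, Finset.mem_filter.mpr ⟨Finset.mem_range.mpr hy0, ⟨c, hty ▸ ht, hc, hc⟩⟩⟩
  set y := S.min' hSne with hy
  have hymem := S.min'_mem hSne
  obtain ⟨P, hyP, hcP, hPc⟩ := (Finset.mem_filter.mp hymem).2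
  have hylen : y < σs.length := Finset.mem_range.mp (Finset.mem_filter.mp hymem).1
  -- y is the earliest firing position among all parts on the cycle through c;
  -- in particular it is the first firing of part P
  have hyocc : y ∈ occs σs (G P) := mem_occs hylen hyP
  have hymin : ∀ z ∈ occs σs (G P), y ≤ z := by
    intro z hz
    apply S.min'_le
    exact Finset.mem_filter.mpr ⟨Finset.mem_range.mpr (occs_lt hz), ⟨P, occs_mem hz, hcP, hPc⟩⟩
  -- predecessor part on the cycle
  obtain ⟨P', hcP', heP'⟩ := (Relation.TransGen.tail'_iff).mp hcP
  have hP'1 : Relation.TransGen (execOrder N G) c P' := by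
    rcases (Relation.reflTransGen_iff_eq_or_transGen.mp hcP') with he | htg
    · exact he ▸ hc
    · exact htg
  have hP'2 : Relation.TransGen (execOrder N G) P' c :=
    Relation.TransGen.head heP' hPc
  obtain ⟨ph, hph⟩ := heP'
  have hphX : ph ∈ N.exit (G P') := (Finset.mem_inter.mp hph).1
  have hphE : ph ∈ N.entry (G P) := (Finset.mem_inter.mp hph).2
  have h1 : (ph, tr σs y) ∈ N.flow := first_consumes hWF hch hσs hyocc hymin hphE
  have h2 : 1 ≤ Mk N σs y ph := tr_enabled hσs hylen h1
  rcases token_src hσs y hylen.le ph h2 with hsrc | ⟨z, hzy, hzf⟩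
  · obtain ⟨u, hu⟩ := (mem_exit_iff.mp hphX).2.1
    exact source_no_pre hWF (hsrc ▸ (mem_pre_iff N).mp (Finset.mem_inter.mp hu).1)
  · have hzlen : z < σs.length := hzy.trans hylen
    have hzt : tr σs z ∈ N.transitions := tr_trans hσs hzlen
    have hzS : z ∈ S := by
      rcases crossing_pre hWF hch hphX hphE hzf hzt with h | h
      · exact Finset.mem_filter.mpr ⟨Finset.mem_range.mpr hzlen, ⟨P', h, hP'1, hP'2⟩⟩
      · exact Finset.mem_filter.mpr ⟨Finset.mem_range.mpr hzlen, ⟨P, h, hcP, hPc⟩⟩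
    have := S.min'_le z hzS
    omega

end PN

namespace PN

variable {N : Net} {σ : List ℕ} {n : ℕ} {G : Fin n → Finset ℕ}

/-- If `m ⊏ k` and `T_m` fires in a complete run, then `T_k` also fires. -/
lemma succ_fires (hWF : N.IsWF) (hch : ConflictHiding N G) (hsound : N.Sound)
    (hσ : N.firingSeq N.initM σ N.finalM) {m k : Fin n} (hex : execOrder N G m k)
    (hne : (occs σ (G m)).Nonempty) : (occs σ (G k)).Nonempty := by
  obtain ⟨p, hp⟩ := id hex
  have hpX : p ∈ N.exit (G m) := (Finset.mem_inter.mp hp).1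
  have hpE : p ∈ N.entry (G k) := (Finset.mem_inter.mp hp).2
  set l := (occs σ (G m)).max' hne with hl
  have hlo : l ∈ occs σ (G m) := (occs σ (G m)).max'_mem hne
  have hlmax : ∀ y ∈ occs σ (G m), y ≤ l := fun y hy => (occs σ (G m)).le_max' y hy
  have hllen : l < σ.length := occs_lt hlo
  have h1 : (tr σ l, p) ∈ N.flow := last_produces hWF hch hσ hlo hlmax hpX
  have hpsink : p ≠ N.sink := by
    obtain ⟨v, hv⟩ := (mem_entry_iff.mp hpE).2.1
    exact ne_sink hWF (mem_entry_iff.mp hpE).1 ((mem_post_iff N).mp (Finset.mem_inter.mp hv).1)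
  have h2 : 1 ≤ Mk N σ (l + 1) p := by
    have hrec := val_rec hσ hllen p
    rw [if_pos ((mem_post_iff N).mpr h1)] at hrec
    by_cases hpre : p ∈ N.pre (tr σ l)
    · have := (fire_at hσ hllen).1.2 p hpre
      rw [if_pos hpre] at hrec
      omega
    · rw [if_neg hpre] at hrec
      omega
  obtain ⟨c, hc1, hc2, hc3⟩ := token_sink hσ hpsink (σ.length - (l + 1)) (l + 1) le_rfl (by omega) h2
  have hct : tr σ c ∈ N.transitions := tr_trans hσ hc2
  rcases crossing_post hWF hch hpX hpE hc3 hct with h | h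
  · exact absurd (hlmax c (mem_occs hc2 h)) (by omega)
  · exact ⟨c, mem_occs hc2 h⟩

/-- Key lemma: if `m ⊏ k`, every firing of `T_m` precedes the first firing of `T_k`. -/
lemma single_step (hWF : N.IsWF) (hsafe : N.Safe) (hsound : N.Sound)
    (hch : ConflictHiding N G) (hσ : N.firingSeq N.initM σ N.finalM)
    {m k : Fin n} (hex : execOrder N G m k)
    (hnem : (occs σ (G m)).Nonempty) (hnek : (occs σ (G k)).Nonempty) :
    ∀ a ∈ occs σ (G m), a < (occs σ (G k)).min' hnek := by
  by_contra hcon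
  push_neg at hcon
  obtain ⟨a, ha, haf⟩ := hcon
  set f := (occs σ (G k)).min' hnek with hfdef
  have hfo : f ∈ occs σ (G k) := (occs σ (G k)).min'_mem hnek
  have hfmin : ∀ y ∈ occs σ (G k), f ≤ y := fun y hy => (occs σ (G k)).min'_le y hy
  have hflen : f < σ.length := occs_lt hfo
  have hfk : tr σ f ∈ G k := occs_mem hfo
  have hmk : m ≠ k := by
    intro he
    exact acyc hWF hch hsound k (Relation.TransGen.single (he ▸ hex))
  have hfa : f < a := by
    rcases lt_or_eq_of_le haf with h | h
    · exact h
    · exact absurd (part_unique hch (occs_mem ha) (h ▸ hfk)) hmk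
  obtain ⟨p, hp⟩ := id hex
  have hpX : p ∈ N.exit (G m) := (Finset.mem_inter.mp hp).1
  have hpE : p ∈ N.entry (G k) := (Finset.mem_inter.mp hp).2
  have hpf : (p, tr σ f) ∈ N.flow := first_consumes hWF hch hσ hfo hfmin hpE
  -- the last T_m firing, which is after f
  set l := (occs σ (G m)).max' hnem with hldef
  have hlo : l ∈ occs σ (G m) := (occs σ (G m)).max'_mem hnem
  have hlmax : ∀ y ∈ occs σ (G m), y ≤ l := fun y hy => (occs σ (G m)).le_max' y hy
  have hfl : f < l := lt_of_lt_of_le hfa (hlmax a ha)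
  have hllen : l < σ.length := occs_lt hlo
  -- A : positions after f where T_m produces an exit point
  set A := (Finset.range σ.length).filter
    (fun y => f < y ∧ tr σ y ∈ G m ∧ ∃ q ∈ N.exit (G m), (tr σ y, q) ∈ N.flow) with hAdef
  have hlA : l ∈ A := by
    obtain ⟨q, hq⟩ := trans_has_post hWF (tr_trans hσ hllen)
    exact Finset.mem_filter.mpr ⟨Finset.mem_range.mpr hllen,
      hfl, occs_mem hlo, q, last_in_exits hWF hch hσ hlo hlmax hq, hq⟩
  have hAne : A.Nonempty := ⟨l, hlA⟩
  set x := A.min' hAne with hxdef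
  have hxA := A.min'_mem hAne
  obtain ⟨hfx, hxm, q0, hq0X, hq0f⟩ := (Finset.mem_filter.mp hxA).2
  have hxlen : x < σ.length := Finset.mem_range.mp (Finset.mem_filter.mp hxA).1
  have hxmin : ∀ y ∈ A, x ≤ y := fun y hy => A.min'_le y hy
  have hxp : (tr σ x, p) ∈ N.flow := exit_produce hch hq0X hpX hxm hq0f
  -- branch data at p
  have hdich : (N.pre p ∩ G k) = ∅ ∨ (N.post p ∩ G m) = ∅ := by
    by_contra hd
    push_neg at hd
    obtain ⟨hR, hV⟩ := hd
    obtain ⟨r, hr⟩ := hR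
    obtain ⟨v, hv⟩ := hV
    have hpXk : p ∈ N.exit (G k) := by
      rw [mem_exit_iff]
      refine ⟨(mem_entry_iff.mp hpE).1, ⟨r, hr⟩, Or.inr ?_⟩
      refine ⟨v, Finset.mem_inter.mpr ⟨(Finset.mem_inter.mp hv).1, Finset.mem_sdiff.mpr
        ⟨part_subset hch (Finset.mem_inter.mp hv).2, ?_⟩⟩⟩
      intro hvk
      exact hmk (part_unique hch (Finset.mem_inter.mp hv).2 hvk)
    exact hmk (hch.2.2.1 p m k hpX hpXk)
  -- in the R = ∅ branch, p is empty strictly between f and x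
  have hpzero : (N.pre p ∩ G k) = ∅ → ∀ z, f + 1 ≤ z → z ≤ x → Mk N σ z p = 0 := by
    intro hR z hz1 hz2
    have hMf1 : Mk N σ (f + 1) p = 0 := by
      have hrec := val_rec hσ hflen p
      rw [if_pos ((mem_pre_iff N).mpr hpf)] at hrec
      have hnpost : p ∉ N.post (tr σ f) := by
        intro hc
        have : tr σ f ∈ N.pre p ∩ G k :=
          Finset.mem_inter.mpr ⟨(mem_pre_iff N).mpr ((mem_post_iff N).mp hc), hfk⟩
        rw [hR] at this
        exact absurd this (Finset.notMem_empty _)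
      rw [if_neg hnpost] at hrec
      have hsafef : Mk N σ f p ≤ 1 := hsafe _ (reach_Mk hσ f) p
      omega
    apply zero_persist hσ (f + 1) z hz1 (by omega) hMf1
    intro w hw1 hw2 hwf
    have hwlen : w < σ.length := by omega
    have hwt : tr σ w ∈ N.transitions := tr_trans hσ hwlen
    rcases crossing_pre hWF hch hpX hpE hwf hwt with h | h
    · have hwA : w ∈ A := Finset.mem_filter.mpr ⟨Finset.mem_range.mpr hwlen,
        by omega, h, p, hpX, hwf⟩
      exact absurd (hxmin w hwA) (by omega)
    · have : tr σ w ∈ N.pre p ∩ G k :=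
        Finset.mem_inter.mpr ⟨(mem_pre_iff N).mpr hwf, h⟩
      rw [hR] at this
      exact absurd this (Finset.notMem_empty _)
  -- the firing at x does not consume p, and neither does any noncone move before x
  have hnoconsume : ∀ w, f + 1 ≤ w → w ≤ x → (p, tr σ w) ∈ N.flow → tr σ w ∈ G m → False := by
    intro w hw1 hw2 hwf hwm
    rcases hdich with hR | hV
    · have := tr_enabled hσ (by omega : w < σ.length) hwf
      rw [hpzero hR w hw1 hw2] at this
      omega
    · have : tr σ w ∈ N.post p ∩ G m :=
        Finset.mem_inter.mpr ⟨(mem_post_iff N).mpr hwf, hwm⟩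
      rw [hV] at this
      exact absurd this (Finset.notMem_empty _)
  -- the cone of parts (weakly) above k
  set coneT := N.transitions.filter
    (fun t => ∃ P, t ∈ G P ∧ Relation.ReflTransGen (execOrder N G) k P) with hconedef
  have hkcone : ∀ t ∈ G k, t ∈ coneT := fun t ht =>
    Finset.mem_filter.mpr ⟨part_subset hch ht, k, ht, Relation.ReflTransGen.refl⟩
  have hmnotcone : ∀ t ∈ G m, t ∉ coneT := by
    intro t ht hc
    obtain ⟨_, P, htP, hkP⟩ := Finset.mem_filter.mp hc
    have hPm : P = m := part_unique hch htP ht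
    rw [hPm] at hkP
    rcases Relation.reflTransGen_iff_eq_or_transGen.mp hkP with he | htg
    · exact acyc hWF hch hsound k (Relation.TransGen.single (he ▸ hex))
    · exact acyc hWF hch hsound m (Relation.TransGen.head hex htg)
  -- a transition outside the cone never consumes a place fed by the cone
  have hconeblock : ∀ v u q : ℕ, v ∈ N.transitions → v ∉ coneT →
      (q, v) ∈ N.flow → (u, q) ∈ N.flow → u ∈ coneT → False := by
    intro v u q hvt hvnc hqv huq huc
    obtain ⟨hut, P₁, hP₁, hkP₁⟩ := Finset.mem_filter.mp huc
    obtain ⟨P₂, hP₂⟩ := part_exists hch hvt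
    by_cases hPP : P₁ = P₂
    · exact hvnc (Finset.mem_filter.mpr ⟨hvt, P₂, hP₂, hPP ▸ hkP₁⟩)
    · have hord := tok_order hWF hch hP₁ hP₂ hPP huq hqv
      exact hvnc (Finset.mem_filter.mpr ⟨hvt, P₂, hP₂, hkP₁.tail hord⟩)
  -- counting of cone firings
  set conC : ℕ → ℕ → ℕ := fun q c =>
    ∑ y ∈ Finset.Ico f c, (if tr σ y ∈ coneT ∧ (q, tr σ y) ∈ N.flow then 1 else 0) with hCdef
  set conP : ℕ → ℕ → ℕ := fun q c =>
    ∑ y ∈ Finset.Ico f c, (if tr σ y ∈ coneT ∧ (tr σ y, q) ∈ N.flow then 1 else 0) with hPdef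
  -- main invariant: the non-cone sub-run can be fired on its own
  have hinv : ∀ c, f ≤ c → c ≤ x → ∃ L M'', N.firingSeq (Mk N σ f) L M'' ∧
      (∀ q, M'' q + conP q c = Mk N σ c q + conC q c) ∧ 1 ≤ M'' p := by
    intro c hc1
    induction c, hc1 using Nat.le_induction with
    | base =>
      intro _
      refine ⟨[], Mk N σ f, rfl, ?_, tr_enabled hσ hflen hpf⟩
      intro q
      simp [hCdef, hPdef]
    | succ c hfc ih =>
      intro hc2
      have hcx : c < x := by omega
      have hclen : c < σ.length := hcx.trans hxlen
      obtain ⟨L, M'', hL, hinvq, hMp⟩ := ih (by omega)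
      have hsumC : ∀ q, conC q (c + 1) = conC q c +
          (if tr σ c ∈ coneT ∧ (q, tr σ c) ∈ N.flow then 1 else 0) := by
        intro q
        exact Finset.sum_Ico_succ_top hfc _
      have hsumP : ∀ q, conP q (c + 1) = conP q c +
          (if tr σ c ∈ coneT ∧ (tr σ c, q) ∈ N.flow then 1 else 0) := by
        intro q
        exact Finset.sum_Ico_succ_top hfc _
      by_cases hcone : tr σ c ∈ coneT
      · refine ⟨L, M'', hL, ?_, hMp⟩
        intro q
        have h1 := hinvq q
        have h2 := val_rec hσ hclen q
        have e1 : (if tr σ c ∈ coneT ∧ (q, tr σ c) ∈ N.flow then 1 else 0)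
            = (if q ∈ N.pre (tr σ c) then 1 else 0) := by
          by_cases hq : q ∈ N.pre (tr σ c)
          · rw [if_pos hq, if_pos ⟨hcone, (mem_pre_iff N).mp hq⟩]
          · rw [if_neg hq, if_neg (fun hh => hq ((mem_pre_iff N).mpr hh.2))]
        have e2 : (if tr σ c ∈ coneT ∧ (tr σ c, q) ∈ N.flow then 1 else 0)
            = (if q ∈ N.post (tr σ c) then 1 else 0) := by
          by_cases hq : q ∈ N.post (tr σ c)
          · rw [if_pos hq, if_pos ⟨hcone, (mem_post_iff N).mp hq⟩]
          · rw [if_neg hq, if_neg (fun hh => hq ((mem_post_iff N).mpr hh.2))]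
        rw [hsumC q, hsumP q, e1, e2]
        omega
      · have hP0 : ∀ q, q ∈ N.pre (tr σ c) → conP q c = 0 := by
          intro q hq
          apply Finset.sum_eq_zero
          intro y hy
          rw [if_neg]
          rintro ⟨hyc, hyf⟩
          exact hconeblock (tr σ c) (tr σ y) q (tr_trans hσ hclen) hcone
            ((mem_pre_iff N).mp hq) hyf hyc
        have henn : N.enabled (tr σ c) M'' := by
          refine ⟨tr_trans hσ hclen, fun q hq => ?_⟩
          have h3 : 1 ≤ Mk N σ c q := (fire_at hσ hclen).1.2 q hq
          have := hinvq q
          rw [hP0 q hq] at this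
          omega
        refine ⟨L ++ [tr σ c], PN.step N (tr σ c) M'', fs_append.mpr
          ⟨M'', hL, ⟨_, fire_step henn, rfl⟩⟩, ?_, ?_⟩
        · intro q
          have hstep := (fire_step henn).2 q
          have h2 := val_rec hσ hclen q
          have h1 := hinvq q
          rw [hsumC q, hsumP q]
          have hc1' : (if tr σ c ∈ coneT ∧ (q, tr σ c) ∈ N.flow then 1 else 0) = 0 := by
            rw [if_neg]; rintro ⟨hc', _⟩; exact hcone hc'
          have hc2' : (if tr σ c ∈ coneT ∧ (tr σ c, q) ∈ N.flow then 1 else 0) = 0 := by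
            rw [if_neg]; rintro ⟨hc', _⟩; exact hcone hc'
          rw [hc1', hc2']
          omega
        · -- p is never consumed by a non-cone move strictly between f and x
          have hfc' : f < c := by
            rcases lt_or_eq_of_le hfc with h | h
            · exact h
            · exfalso; exact hcone (h ▸ hkcone _ hfk)
          have hstep := (fire_step henn).2 p
          have hnp : p ∉ N.pre (tr σ c) := by
            intro hc'
            have hpflow : (p, tr σ c) ∈ N.flow := (mem_pre_iff N).mp hc'
            rcases crossing_post hWF hch hpX hpE hpflow (tr_trans hσ hclen) with h | h
            · exact hnoconsume c (by omega) (by omega) hpflow h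
            · exact hcone (hkcone _ h)
          rw [if_neg hnp] at hstep
          split_ifs at hstep <;> omega
  -- conclude: fire position x on top of the reordered run; p gets two tokens
  obtain ⟨L, M'', hL, hinvq, hMp⟩ := hinv x hfx.le le_rfl
  have hxnotcone : tr σ x ∉ coneT := hmnotcone _ hxm
  have hP0 : ∀ q, q ∈ N.pre (tr σ x) → conP q x = 0 := by
    intro q hq
    apply Finset.sum_eq_zero
    intro y hy
    rw [if_neg]
    rintro ⟨hyc, hyf⟩
    exact hconeblock (tr σ x) (tr σ y) q (tr_trans hσ hxlen) hxnotcone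
      ((mem_pre_iff N).mp hq) hyf hyc
  have hxen : N.enabled (tr σ x) M'' := by
    refine ⟨tr_trans hσ hxlen, fun q hq => ?_⟩
    have h3 : 1 ≤ Mk N σ x q := (fire_at hσ hxlen).1.2 q hq
    have := hinvq q
    rw [hP0 q hq] at this
    omega
  have hfin := (fire_step hxen).2 p
  have hnp : p ∉ N.pre (tr σ x) := by
    intro hc'
    exact hnoconsume x (by omega) le_rfl ((mem_pre_iff N).mp hc') hxm
  rw [if_neg hnp, if_pos ((mem_post_iff N).mpr hxp)] at hfin
  have h2p : 2 ≤ PN.step N (tr σ x) M'' p := by omega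
  have hreach : N.reachable N.initM (PN.step N (tr σ x) M'') := by
    refine ⟨σ.take f ++ (L ++ [tr σ x]), fs_append.mpr ⟨Mk N σ f, fs_take hσ f,
      fs_append.mpr ⟨M'', hL, ⟨_, fire_step hxen, rfl⟩⟩⟩⟩
  have := hsafe _ hreach p
  omega

end PN

/-- For a conflict-hiding partition of a safe and sound
WF-net: if i ⊏ j in the transitive closure of order(N,G), then in every firing
sequence from [source] to [sink], every firing of a transition of T_i occurs
before every firing of a transition of T_j. -/
theorem execOrder_respected_by_firing_sequences
    (N : Net) (hWF : N.IsWF) (hsafe : N.Safe) (hsound : N.Sound)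
    {n : ℕ} (G : Fin n → Finset ℕ) (hch : ConflictHiding N G)
    (i j : Fin n) (hij : Relation.TransGen (execOrder N G) i j)
    (σ : List ℕ) (hσ : N.firingSeq N.initM σ N.finalM) :
    ∀ (a b : ℕ) (ha : a < σ.length) (hb : b < σ.length),
      σ.get ⟨a, ha⟩ ∈ G i → σ.get ⟨b, hb⟩ ∈ G j → a < b := by
  intro a b ha hb hai hbj
  have hta : PN.tr σ a = σ.get ⟨a, ha⟩ := by
    unfold PN.tr
    rw [List.getD_eq_getElem σ 0 ha]
    simp
  have htb : PN.tr σ b = σ.get ⟨b, hb⟩ := by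
    unfold PN.tr
    rw [List.getD_eq_getElem σ 0 hb]
    simp
  have hA : a ∈ PN.occs σ (G i) := PN.mem_occs ha (by rw [hta]; exact hai)
  have hB : b ∈ PN.occs σ (G j) := PN.mem_occs hb (by rw [htb]; exact hbj)
  have hnei : (PN.occs σ (G i)).Nonempty := ⟨a, hA⟩
  have main : ∀ j', Relation.TransGen (execOrder N G) i j' →
      ∃ _ : (PN.occs σ (G j')).Nonempty,
        ∀ a' ∈ PN.occs σ (G i), ∀ b' ∈ PN.occs σ (G j'), a' < b' := by
    intro j' h
    induction h with
    | single hex =>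
      have hk := PN.succ_fires hWF hch hsound hσ hex hnei
      refine ⟨hk, fun a' ha' b' hb' => ?_⟩
      exact lt_of_lt_of_le (PN.single_step hWF hsafe hsound hch hσ hex hnei hk a' ha')
        (Finset.min'_le _ b' hb')
    | @tail mid fin hTG hex ih =>
      obtain ⟨hne', hord⟩ := ih
      have hk := PN.succ_fires hWF hch hsound hσ hex hne'
      refine ⟨hk, fun a' ha' b' hb' => ?_⟩
      have h1 : a' < (PN.occs σ (G mid)).min' hne' :=
        hord a' ha' _ ((PN.occs σ (G mid)).min'_mem hne')
      have h2 := PN.single_step hWF hsafe hsound hch hσ hex hne' hk _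
        ((PN.occs σ (G mid)).min'_mem hne')
      have h3 := Finset.min'_le _ b' hb'
      omega
  obtain ⟨_, hord⟩ := main j hij
  exact hord a hA b hB


end
end

section
/- For every POWL 2.0 model ψ, there exists a safe and sound separable WF-net N such that L(N) = L(ψ). -/
/-!
Common formalization of Petri nets, workflow nets (WF-nets), POWL 2.0 models,
and the WF-net-to-POWL conversion algorithm.
-/

noncomputable section
attribute [local instance] Classical.propDecidable

/-! ### Auxiliary development: finite automata and their workflow-net encoding -/

namespace PowlProof

/-- A finite ε-NFA-like automaton with a single start and accept state. -/
structure Auto (α : Type) where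
  edges : Finset (α × Option ℕ × α)
  start : α
  accept : α

/-- Optionally cons a letter. -/
def ocons (l : Option ℕ) (w : List ℕ) : List ℕ := l.elim w (· :: w)

@[simp] lemma ocons_none (w : List ℕ) : ocons none w = w := rfl
@[simp] lemma ocons_some (x : ℕ) (w : List ℕ) : ocons (some x) w = x :: w := rfl

lemma ocons_append (l : Option ℕ) (w v : List ℕ) : ocons l w ++ v = ocons l (w ++ v) := by
  cases l <;> rfl

variable {α : Type}

/-- Paths in an automaton, collecting the (non-ε) labels. -/
inductive Lpath (A : Auto α) : α → List ℕ → α → Prop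
  | nil (a : α) : Lpath A a [] a
  | step {a b c : α} {l : Option ℕ} {w : List ℕ} :
      (a, l, b) ∈ A.edges → Lpath A b w c → Lpath A a (ocons l w) c

/-- The language of an automaton. -/
def aLang (A : Auto α) : Set (List ℕ) := {w | Lpath A A.start w A.accept}

/-- Reachability in an automaton. -/
def Reach (A : Auto α) (a b : α) : Prop := ∃ w, Lpath A a w b

lemma Lpath.trans {A : Auto α} {a b c : α} {u v : List ℕ}
    (h1 : Lpath A a u b) (h2 : Lpath A b v c) : Lpath A a (u ++ v) c := by
  induction h1 with
  | nil => simpa using h2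
  | step he _ ih => rw [ocons_append]; exact .step he (ih h2)

lemma Lpath.single {A : Auto α} {a b : α} {l : Option ℕ} (he : (a, l, b) ∈ A.edges) :
    Lpath A a (ocons l []) b := .step he (.nil _)

lemma Reach.trans {A : Auto α} {a b c : α} (h1 : Reach A a b) (h2 : Reach A b c) :
    Reach A a c := by
  obtain ⟨u, hu⟩ := h1; obtain ⟨v, hv⟩ := h2; exact ⟨u ++ v, hu.trans hv⟩

lemma Reach.refl (A : Auto α) (a : α) : Reach A a a := ⟨[], .nil a⟩

lemma Lpath.exists_last_edge {A : Auto α} {a b : α} {w : List ℕ}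
    (h : Lpath A a w b) (hne : a ≠ b) : ∃ e ∈ A.edges, e.2.2 = b := by
  induction h with
  | nil => exact absurd rfl hne
  | @step a b' c l w he _ ih =>
    by_cases hb : b' = c
    · exact ⟨(a, l, b'), he, hb⟩
    · exact ih hb

lemma Lpath.exists_first_edge {A : Auto α} {a b : α} {w : List ℕ}
    (h : Lpath A a w b) (hne : a ≠ b) : ∃ l c, (a, l, c) ∈ A.edges := by
  cases h with
  | nil => exact absurd rfl hne
  | step he _ => exact ⟨_, _, he⟩

lemma Lpath.mono {A B : Auto α} (hE : A.edges ⊆ B.edges) {a b : α} {w : List ℕ}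
    (h : Lpath A a w b) : Lpath B a w b := by
  induction h with
  | nil => exact .nil _
  | step he _ ih => exact .step (hE he) ih

lemma Lpath.cons_decomp {A : Auto α} :
    ∀ {a c : α} {w' : List ℕ}, Lpath A a w' c → ∀ {x : ℕ} {w : List ℕ}, w' = x :: w →
      ∃ p q, Lpath A a [] p ∧ (p, some x, q) ∈ A.edges ∧ Lpath A q w c := by
  intro a c w' h
  induction h with
  | nil => intro x w hw; cases hw
  | @step a b c l w₀ he hp ih =>
    intro x w hw
    cases l with
    | none =>
      simp only [ocons_none] at hw
      obtain ⟨p, q, h1, h2, h3⟩ := ih hw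
      exact ⟨p, q, .step he h1, h2, h3⟩
    | some y =>
      simp only [ocons_some, List.cons.injEq] at hw
      obtain ⟨rfl, rfl⟩ := hw
      exact ⟨a, b, .nil _, he, hp⟩

/-- Pre-conditions maintained by all our constructions. -/
structure Pre (A : Auto α) : Prop where
  nese : A.start ≠ A.accept
  noself : ∀ e ∈ A.edges, e.1 ≠ e.2.2
  noin : ∀ e ∈ A.edges, e.2.2 ≠ A.start
  noout : ∀ e ∈ A.edges, e.1 ≠ A.accept
  nonempty : (aLang A).Nonempty

/-- Trimmed well-behaved automata. -/
structure Good (A : Auto α) extends Pre A : Prop where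
  trimmed : ∀ e ∈ A.edges, Reach A A.start e.1 ∧ Reach A e.2.2 A.accept

/-- Remove useless edges. -/
def trim (A : Auto α) : Auto α where
  edges := A.edges.filter fun e => Reach A A.start e.1 ∧ Reach A e.2.2 A.accept
  start := A.start
  accept := A.accept

lemma trim_lift {A : Auto α} {a b : α} {w : List ℕ} (h : Lpath A a w b)
    (ha : Reach A A.start a) (hb : Reach A b A.accept) : Lpath (trim A) a w b := by
  induction h with
  | nil => exact .nil _
  | @step a b' c l w₀ he hp ih =>
    have hb' : Reach A b' A.accept := Reach.trans ⟨w₀, hp⟩ hb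
    refine .step ?_ (ih (ha.trans ⟨_, Lpath.single he⟩) hb)
    simp only [trim, Finset.mem_filter]
    exact ⟨he, ha, hb'⟩

lemma aLang_trim (A : Auto α) : aLang (trim A) = aLang A := by
  apply Set.eq_of_subset_of_subset
  · intro w hw; exact Lpath.mono (Finset.filter_subset _ _) hw
  · intro w hw; exact trim_lift hw (Reach.refl _ _) (Reach.refl _ _)

lemma edge_triple {β : Type} (e : α × Option ℕ × β) : (e.1, e.2.1, e.2.2) = e := rfl

lemma good_trim {A : Auto α} (h : Pre A) : Good (trim A) := by
  have hsub : (trim A).edges ⊆ A.edges := Finset.filter_subset _ _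
  refine ⟨⟨h.nese, fun e he => h.noself e (hsub he), fun e he => h.noin e (hsub he),
    fun e he => h.noout e (hsub he), by rw [aLang_trim]; exact h.nonempty⟩, ?_⟩
  intro e he
  simp only [trim, Finset.mem_filter] at he
  obtain ⟨heA, ⟨u, hu⟩, ⟨v, hv⟩⟩ := he
  have he1 : Reach A e.1 A.accept := by
    refine ⟨ocons e.2.1 v, ?_⟩
    have h1 : Lpath A e.1 (ocons e.2.1 []) e.2.2 := Lpath.single (by rw [edge_triple]; exact heA)
    have h2 := h1.trans hv
    rwa [ocons_append] at h2
  have he2 : Reach A A.start e.2.2 := by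
    refine ⟨u ++ ocons e.2.1 [], ?_⟩
    exact hu.trans (Lpath.single (by rw [edge_triple]; exact heA))
  constructor
  · exact ⟨u, trim_lift hu (Reach.refl _ _) he1⟩
  · exact ⟨v, trim_lift hv he2 (Reach.refl _ _)⟩

/-! ### Encoding a good automaton as a workflow net -/

section NetOf

variable (enc : α ↪ ℕ)

def pid (a : α) : ℕ := 2 * enc a

def oenc : Option ℕ → ℕ
  | none => 0
  | some x => x + 1

def odec : ℕ → Option ℕ
  | 0 => none
  | (k+1) => some k

@[simp] lemma odec_oenc (l : Option ℕ) : odec (oenc l) = l := by cases l <;> rfl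

def tid (e : α × Option ℕ × α) : ℕ :=
  2 * Nat.pair (enc e.1) (Nat.pair (oenc e.2.1) (enc e.2.2)) + 1

lemma pid_inj {a b : α} (h : pid enc a = pid enc b) : a = b := by
  unfold pid at h; exact enc.injective (by omega)

lemma oenc_inj {l l' : Option ℕ} (h : oenc l = oenc l') : l = l' := by
  cases l <;> cases l' <;> simp [oenc] at h ⊢ <;> omega

lemma tid_inj {e e' : α × Option ℕ × α} (h : tid enc e = tid enc e') : e = e' := by
  unfold tid at h
  have h2 : Nat.pair (enc e.1) (Nat.pair (oenc e.2.1) (enc e.2.2)) =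
      Nat.pair (enc e'.1) (Nat.pair (oenc e'.2.1) (enc e'.2.2)) := by omega
  rw [Nat.pair_eq_pair] at h2
  obtain ⟨h3, h4⟩ := h2
  rw [Nat.pair_eq_pair] at h4
  obtain ⟨h5, h6⟩ := h4
  have := enc.injective h3
  have := enc.injective h6
  have := oenc_inj h5
  rw [← edge_triple e, ← edge_triple e']
  simp_all

lemma pid_ne_tid (a : α) (e : α × Option ℕ × α) : pid enc a ≠ tid enc e := by
  unfold pid tid; omega

/-- The workflow state machine associated with an automaton. -/
def netOf (A : Auto α) : Net where
  places := A.edges.image (fun e => pid enc e.1) ∪ A.edges.image (fun e => pid enc e.2.2) ∪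
    {pid enc A.start, pid enc A.accept}
  transitions := A.edges.image (tid enc)
  flow := A.edges.biUnion fun e => {(pid enc e.1, tid enc e), (tid enc e, pid enc e.2.2)}
  label := fun x => odec ((Nat.unpair (Nat.unpair ((x - 1) / 2)).2).1)
  source := pid enc A.start
  sink := pid enc A.accept

variable (A : Auto α)

lemma label_tid (e : α × Option ℕ × α) : (netOf enc A).label (tid enc e) = e.2.1 := by
  show odec _ = e.2.1
  have h1 : tid enc e - 1 = 2 * Nat.pair (enc e.1) (Nat.pair (oenc e.2.1) (enc e.2.2)) := by
    unfold tid; omega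
  rw [h1, Nat.mul_div_cancel_left _ (by norm_num), Nat.unpair_pair, Nat.unpair_pair]
  simp

lemma mem_flow {u v : ℕ} : (u, v) ∈ (netOf enc A).flow ↔
    ∃ e ∈ A.edges, (u = pid enc e.1 ∧ v = tid enc e) ∨ (u = tid enc e ∧ v = pid enc e.2.2) := by
  show _ ∈ Finset.biUnion _ _ ↔ _
  simp only [Finset.mem_biUnion, Finset.mem_insert, Finset.mem_singleton, Prod.mk.injEq]

lemma pre_tid {e : α × Option ℕ × α} (he : e ∈ A.edges) :
    (netOf enc A).pre (tid enc e) = {pid enc e.1} := by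
  ext y
  simp only [Net.pre, Finset.mem_image, Finset.mem_filter, Finset.mem_singleton]
  constructor
  · rintro ⟨⟨u, v⟩, ⟨hf, hv⟩, rfl⟩
    dsimp only at hv
    rw [mem_flow] at hf
    obtain ⟨e', he', h | h⟩ := hf
    · have he2 : e' = e := tid_inj enc (by rw [← h.2]; exact hv)
      subst he2; exact h.1
    · exact absurd (by rw [← h.2]; exact hv : pid enc e'.2.2 = tid enc e) (pid_ne_tid enc _ _)
  · rintro rfl
    exact ⟨(pid enc e.1, tid enc e), ⟨(mem_flow enc A).2 ⟨e, he, Or.inl ⟨rfl, rfl⟩⟩, rfl⟩, rfl⟩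

lemma post_tid {e : α × Option ℕ × α} (he : e ∈ A.edges) :
    (netOf enc A).post (tid enc e) = {pid enc e.2.2} := by
  ext y
  simp only [Net.post, Finset.mem_image, Finset.mem_filter, Finset.mem_singleton]
  constructor
  · rintro ⟨⟨u, v⟩, ⟨hf, hu⟩, rfl⟩
    dsimp only at hu
    rw [mem_flow] at hf
    obtain ⟨e', he', h | h⟩ := hf
    · exact absurd (by rw [← h.1]; exact hu : pid enc e'.1 = tid enc e) (pid_ne_tid enc _ _)
    · have he2 : e' = e := tid_inj enc (by rw [← h.1]; exact hu)
      subst he2; exact h.2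
  · rintro rfl
    exact ⟨(tid enc e, pid enc e.2.2), ⟨(mem_flow enc A).2 ⟨e, he, Or.inr ⟨rfl, rfl⟩⟩, rfl⟩, rfl⟩

lemma mem_pre_pid {q : α} {y : ℕ} : y ∈ (netOf enc A).pre (pid enc q) ↔
    ∃ e ∈ A.edges, e.2.2 = q ∧ y = tid enc e := by
  simp only [Net.pre, Finset.mem_image, Finset.mem_filter]
  constructor
  · rintro ⟨⟨u, v⟩, ⟨hf, hv⟩, rfl⟩
    dsimp only at hv
    rw [mem_flow] at hf
    obtain ⟨e', he', h | h⟩ := hf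
    · exact absurd (by rw [← h.2]; exact hv.symm : pid enc q = tid enc e') (pid_ne_tid enc _ _)
    · exact ⟨e', he', pid_inj enc (by rw [← h.2]; exact hv), h.1⟩
  · rintro ⟨e, he, rfl, rfl⟩
    exact ⟨(tid enc e, pid enc e.2.2), ⟨(mem_flow enc A).2 ⟨e, he, Or.inr ⟨rfl, rfl⟩⟩, rfl⟩, rfl⟩

lemma mem_post_pid {q : α} {y : ℕ} : y ∈ (netOf enc A).post (pid enc q) ↔
    ∃ e ∈ A.edges, e.1 = q ∧ y = tid enc e := by
  simp only [Net.post, Finset.mem_image, Finset.mem_filter]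
  constructor
  · rintro ⟨⟨u, v⟩, ⟨hf, hu⟩, rfl⟩
    dsimp only at hu
    rw [mem_flow] at hf
    obtain ⟨e', he', h | h⟩ := hf
    · exact ⟨e', he', pid_inj enc (by rw [← h.1]; exact hu), h.2⟩
    · exact absurd (by rw [← h.1]; exact hu.symm : pid enc q = tid enc e') (pid_ne_tid enc _ _)
  · rintro ⟨e, he, rfl, rfl⟩
    exact ⟨(pid enc e.1, tid enc e), ⟨(mem_flow enc A).2 ⟨e, he, Or.inl ⟨rfl, rfl⟩⟩, rfl⟩, rfl⟩

/-- Single-token marking. -/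
def delta (q : α) : Marking := fun p => if p = pid enc q then 1 else 0

lemma initM_eq : (netOf enc A).initM = delta enc A.start := rfl
lemma finalM_eq : (netOf enc A).finalM = delta enc A.accept := rfl

lemma delta_inj {q g : α} (h : delta enc q = delta enc g) : q = g := by
  by_contra hne
  have h1 := congrFun h (pid enc q)
  simp only [delta, if_pos rfl] at h1
  rw [if_neg (fun hh => hne (pid_inj enc hh))] at h1
  exact absurd h1 one_ne_zero

lemma fire_delta {q : α} {t : ℕ} {M' : Marking} (hns : ∀ e ∈ A.edges, e.1 ≠ e.2.2)
    (h : (netOf enc A).fire t (delta enc q) M') :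
    ∃ e ∈ A.edges, t = tid enc e ∧ e.1 = q ∧ M' = delta enc e.2.2 := by
  obtain ⟨⟨ht, hpre⟩, heq⟩ := h
  obtain ⟨e, he, rfl⟩ := Finset.mem_image.1 ht
  have hq : e.1 = q := by
    have h1 := hpre (pid enc e.1) (by rw [pre_tid enc A he]; exact Finset.mem_singleton_self _)
    by_contra hne
    simp only [delta, if_neg (fun hh => hne (pid_inj enc hh))] at h1
    omega
  refine ⟨e, he, rfl, hq, ?_⟩
  subst hq
  have hne2 : pid enc e.1 ≠ pid enc e.2.2 := fun hh => hns e he (pid_inj enc hh)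
  funext p
  have h2 := heq p
  rw [pre_tid enc A he, post_tid enc A he] at h2
  simp only [Finset.mem_singleton, delta] at h2 ⊢
  split_ifs at h2 ⊢ <;> omega

lemma fire_of_edge {e : α × Option ℕ × α} (he : e ∈ A.edges)
    (hns : ∀ e ∈ A.edges, e.1 ≠ e.2.2) :
    (netOf enc A).fire (tid enc e) (delta enc e.1) (delta enc e.2.2) := by
  refine ⟨⟨Finset.mem_image_of_mem _ he, ?_⟩, ?_⟩
  · intro p hp
    rw [pre_tid enc A he, Finset.mem_singleton] at hp
    subst hp; simp [delta]
  · intro p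
    rw [pre_tid enc A he, post_tid enc A he]
    simp only [Finset.mem_singleton, delta]
    split_ifs <;> omega

lemma seq_to_path (hns : ∀ e ∈ A.edges, e.1 ≠ e.2.2) :
    ∀ (σ : List ℕ) (q : α) (M' : Marking), (netOf enc A).firingSeq (delta enc q) σ M' →
      ∃ g, M' = delta enc g ∧ Lpath A q (σ.filterMap (netOf enc A).label) g := by
  intro σ
  induction σ with
  | nil => intro q M' h; exact ⟨q, h, by exact .nil q⟩
  | cons t σ' ih =>
    intro q M' h
    obtain ⟨M₁, hf, hrest⟩ := h
    obtain ⟨e, he, rfl, h1, rfl⟩ := fire_delta enc A hns hf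
    obtain ⟨g, hg, hp⟩ := ih e.2.2 M' hrest
    refine ⟨g, hg, ?_⟩
    have hstep : Lpath A q (ocons e.2.1 (σ'.filterMap (netOf enc A).label)) g := by
      refine .step ?_ hp
      rw [show (q, e.2.1, e.2.2) = e by rw [← h1, edge_triple]]
      exact he
    rw [List.filterMap_cons, label_tid enc A e]
    cases h : e.2.1 with
    | none => rw [h] at hstep; simpa using hstep
    | some x => rw [h] at hstep; simpa using hstep

lemma path_to_seq (hns : ∀ e ∈ A.edges, e.1 ≠ e.2.2) {q g : α} {w : List ℕ}
    (h : Lpath A q w g) :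
    ∃ σ, (netOf enc A).firingSeq (delta enc q) σ (delta enc g) ∧
      σ.filterMap (netOf enc A).label = w := by
  induction h with
  | nil => exact ⟨[], rfl, rfl⟩
  | @step a b c l w he _ ih =>
    obtain ⟨σ, hσ, hw⟩ := ih
    refine ⟨tid enc (a, l, b) :: σ, ⟨delta enc b, fire_of_edge enc A he hns, hσ⟩, ?_⟩
    rw [List.filterMap_cons, label_tid enc A (a, l, b)]
    cases l <;> simp [hw]

lemma reachable_iff (hns : ∀ e ∈ A.edges, e.1 ≠ e.2.2) {M : Marking} :
    (netOf enc A).reachable (netOf enc A).initM M ↔ ∃ g, Reach A A.start g ∧ M = delta enc g := by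
  constructor
  · rintro ⟨σ, hσ⟩
    rw [initM_eq] at hσ
    obtain ⟨g, hg, hp⟩ := seq_to_path enc A hns σ A.start M hσ
    exact ⟨g, ⟨_, hp⟩, hg⟩
  · rintro ⟨g, ⟨w, hw⟩, rfl⟩
    obtain ⟨σ, hσ, _⟩ := path_to_seq enc A hns hw
    exact ⟨σ, by rw [initM_eq]; exact hσ⟩

lemma netOf_safe (hns : ∀ e ∈ A.edges, e.1 ≠ e.2.2) : (netOf enc A).Safe := by
  intro M hM p
  obtain ⟨g, _, rfl⟩ := (reachable_iff enc A hns).1 hM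
  simp only [delta]
  split <;> omega

lemma coReach_of_reach (g : Good A) {q : α} (h : Reach A A.start q) : Reach A q A.accept := by
  by_cases hq : q = A.start
  · subst hq
    obtain ⟨w, hw⟩ := g.nonempty
    exact ⟨w, hw⟩
  · obtain ⟨w, hw⟩ := h
    obtain ⟨e, he, rfl⟩ := hw.exists_last_edge (fun hh => hq hh.symm)
    exact (g.trimmed e he).2

lemma netOf_sound (g : Good A) : (netOf enc A).Sound := by
  have hns := g.noself
  refine ⟨?_, ?_, ?_⟩
  · intro t ht
    obtain ⟨e, he, rfl⟩ := Finset.mem_image.1 ht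
    obtain ⟨w, hw⟩ := (g.trimmed e he).1
    obtain ⟨σ, hσ, _⟩ := path_to_seq enc A hns hw
    refine ⟨delta enc e.1, ⟨σ, by rw [initM_eq]; exact hσ⟩, Finset.mem_image_of_mem _ he, ?_⟩
    intro p hp
    rw [pre_tid enc A he, Finset.mem_singleton] at hp
    subst hp; simp [delta]
  · intro M hM
    obtain ⟨q, hq, rfl⟩ := (reachable_iff enc A hns).1 hM
    obtain ⟨w, hw⟩ := coReach_of_reach A g hq
    obtain ⟨σ, hσ, _⟩ := path_to_seq enc A hns hw
    exact ⟨σ, by rw [finalM_eq]; exact hσ⟩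
  · intro M hM hs
    obtain ⟨q, hq, rfl⟩ := (reachable_iff enc A hns).1 hM
    rw [finalM_eq]
    have : q = A.accept := by
      by_contra hne
      simp only [delta, Net.sink, netOf,
        if_neg (fun hh : pid enc A.accept = pid enc q => hne (pid_inj enc hh).symm)] at hs
      by_cases hh : pid enc A.accept = pid enc q
      · exact hne (pid_inj enc hh).symm
      · simp [hh] at hs
    rw [this]

lemma netOf_lang (hns : ∀ e ∈ A.edges, e.1 ≠ e.2.2) : (netOf enc A).lang = aLang A := by
  ext w
  constructor
  · rintro ⟨σ, hσ, rfl⟩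
    rw [initM_eq] at hσ
    obtain ⟨gg, hg, hp⟩ := seq_to_path enc A hns σ A.start _ hσ
    rw [finalM_eq] at hg
    have hgg : A.accept = gg := delta_inj enc hg
    show Lpath A A.start _ A.accept
    rw [hgg]
    exact hp
  · intro hw
    obtain ⟨σ, hσ, hl⟩ := path_to_seq enc A hns hw
    exact ⟨σ, by rw [initM_eq, finalM_eq]; exact hσ, hl.symm⟩

lemma mem_places {p : ℕ} : p ∈ (netOf enc A).places ↔
    ∃ q, p = pid enc q ∧ (q = A.start ∨ q = A.accept ∨ (∃ e ∈ A.edges, e.1 = q) ∨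
      ∃ e ∈ A.edges, e.2.2 = q) := by
  show p ∈ _ ∪ _ ∪ _ ↔ _
  simp only [Finset.mem_union, Finset.mem_image, Finset.mem_insert, Finset.mem_singleton]
  constructor
  · rintro ((⟨e, he, rfl⟩ | ⟨e, he, rfl⟩) | (rfl | rfl))
    · exact ⟨e.1, rfl, Or.inr (Or.inr (Or.inl ⟨e, he, rfl⟩))⟩
    · exact ⟨e.2.2, rfl, Or.inr (Or.inr (Or.inr ⟨e, he, rfl⟩))⟩
    · exact ⟨A.start, rfl, Or.inl rfl⟩
    · exact ⟨A.accept, rfl, Or.inr (Or.inl rfl)⟩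
  · rintro ⟨q, rfl, (rfl | rfl | ⟨e, he, rfl⟩ | ⟨e, he, rfl⟩)⟩
    · exact Or.inr (Or.inl rfl)
    · exact Or.inr (Or.inr rfl)
    · exact Or.inl (Or.inl ⟨e, he, rfl⟩)
    · exact Or.inl (Or.inr ⟨e, he, rfl⟩)

lemma path_pathRel {a b : α} {w : List ℕ} (h : Lpath A a w b) :
    (netOf enc A).pathRel (pid enc a) (pid enc b) := by
  induction h with
  | nil => exact Relation.ReflTransGen.refl
  | @step a b' c l w he _ ih =>
    have h1 : (pid enc a, tid enc (a, l, b')) ∈ (netOf enc A).flow :=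
      (mem_flow enc A).2 ⟨(a, l, b'), he, Or.inl ⟨rfl, rfl⟩⟩
    have h2 : (tid enc (a, l, b'), pid enc b') ∈ (netOf enc A).flow :=
      (mem_flow enc A).2 ⟨(a, l, b'), he, Or.inr ⟨rfl, rfl⟩⟩
    exact Relation.ReflTransGen.head h1 (Relation.ReflTransGen.head h2 ih)

lemma netOf_wf (g : Good A) : (netOf enc A).IsWF := by
  have hns := g.noself
  refine ⟨⟨?_, ?_⟩, ?_, ?_, ?_, ?_, ?_⟩
  · -- disjoint places transitions
    rw [Finset.disjoint_left]
    intro x hx ht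
    obtain ⟨q, rfl, _⟩ := (mem_places enc A).1 hx
    obtain ⟨e, _, he⟩ := Finset.mem_image.1 ht
    exact pid_ne_tid enc q e he.symm
  · -- flow bipartite
    rintro ⟨u, v⟩ hf
    rw [mem_flow] at hf
    obtain ⟨e, he, ⟨rfl, rfl⟩ | ⟨rfl, rfl⟩⟩ := hf
    · exact Or.inl ⟨(mem_places enc A).2 ⟨e.1, rfl, Or.inr (Or.inr (Or.inl ⟨e, he, rfl⟩))⟩,
        Finset.mem_image_of_mem _ he⟩
    · exact Or.inr ⟨Finset.mem_image_of_mem _ he,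
        (mem_places enc A).2 ⟨e.2.2, rfl, Or.inr (Or.inr (Or.inr ⟨e, he, rfl⟩))⟩⟩
  · exact (mem_places enc A).2 ⟨A.start, rfl, Or.inl rfl⟩
  · exact (mem_places enc A).2 ⟨A.accept, rfl, Or.inr (Or.inl rfl)⟩
  · -- pre empty iff source
    intro p hp
    obtain ⟨q, rfl, hcase⟩ := (mem_places enc A).1 hp
    constructor
    · intro hpre
      by_contra hne
      have hq : q ≠ A.start := fun hh => hne (by rw [hh]; rfl)
      have : ∃ e ∈ A.edges, e.2.2 = q := by
        rcases hcase with rfl | rfl | ⟨e, he, rfl⟩ | ⟨e, he, rfl⟩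
        · exact absurd rfl hq
        · obtain ⟨w, hw⟩ := g.nonempty
          exact hw.exists_last_edge g.nese
        · obtain ⟨w, hw⟩ := (g.trimmed e he).1
          exact hw.exists_last_edge (fun hh => hq hh.symm)
        · exact ⟨e, he, rfl⟩
      obtain ⟨e, he, h22⟩ := this
      have : tid enc e ∈ (netOf enc A).pre (pid enc q) :=
        (mem_pre_pid enc A).2 ⟨e, he, h22, rfl⟩
      rw [hpre] at this
      exact absurd this (Finset.notMem_empty _)
    · intro hp2
      have hq : q = A.start := pid_inj enc hp2
      subst hq
      rw [Finset.eq_empty_iff_forall_notMem]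
      intro y hy
      obtain ⟨e, he, h22, _⟩ := (mem_pre_pid enc A).1 hy
      exact g.noin e he h22
  · -- post empty iff sink
    intro p hp
    obtain ⟨q, rfl, hcase⟩ := (mem_places enc A).1 hp
    constructor
    · intro hpost
      by_contra hne
      have hq : q ≠ A.accept := fun hh => hne (by rw [hh]; rfl)
      have : ∃ e ∈ A.edges, e.1 = q := by
        rcases hcase with rfl | rfl | ⟨e, he, rfl⟩ | ⟨e, he, rfl⟩
        · obtain ⟨w, hw⟩ := g.nonempty
          obtain ⟨l, c, hw2⟩ := hw.exists_first_edge g.nese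
          exact ⟨(A.start, l, c), hw2, rfl⟩
        · exact absurd rfl hq
        · exact ⟨e, he, rfl⟩
        · obtain ⟨w, hw⟩ := (g.trimmed e he).2
          obtain ⟨l, c, hw2⟩ := hw.exists_first_edge hq
          exact ⟨(e.2.2, l, c), hw2, rfl⟩
      obtain ⟨e, he, h11⟩ := this
      have : tid enc e ∈ (netOf enc A).post (pid enc q) :=
        (mem_post_pid enc A).2 ⟨e, he, h11, rfl⟩
      rw [hpost] at this
      exact absurd this (Finset.notMem_empty _)
    · intro hp2
      have hq : q = A.accept := pid_inj enc hp2
      subst hq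
      rw [Finset.eq_empty_iff_forall_notMem]
      intro y hy
      obtain ⟨e, he, h11, _⟩ := (mem_post_pid enc A).1 hy
      exact g.noout e he h11
  · -- path condition
    intro x hx
    have hreach : ∀ q, Reach A A.start q → Reach A q A.accept →
        (netOf enc A).pathRel (netOf enc A).source (pid enc q) ∧
        (netOf enc A).pathRel (pid enc q) (netOf enc A).sink := by
      intro q ⟨w1, h1⟩ ⟨w2, h2⟩
      exact ⟨path_pathRel enc A h1, path_pathRel enc A h2⟩
    rw [Finset.mem_union] at hx
    rcases hx with hx | hx
    · obtain ⟨q, rfl, hcase⟩ := (mem_places enc A).1 hx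
      rcases hcase with rfl | rfl | ⟨e, he, rfl⟩ | ⟨e, he, rfl⟩
      · exact hreach _ (Reach.refl _ _) g.nonempty
      · exact hreach _ g.nonempty (Reach.refl _ _)
      · refine hreach _ (g.trimmed e he).1 ?_
        refine Reach.trans ⟨_, Lpath.single (l := e.2.1) ?_⟩ (g.trimmed e he).2
        rw [edge_triple]; exact he
      · refine hreach _ ?_ (g.trimmed e he).2
        refine Reach.trans (g.trimmed e he).1 ⟨_, Lpath.single (l := e.2.1) ?_⟩
        rw [edge_triple]; exact he
    · obtain ⟨e, he, rfl⟩ := Finset.mem_image.1 hx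
      obtain ⟨h1, _⟩ := hreach _ (g.trimmed e he).1
        (Reach.trans ⟨_, Lpath.single (l := e.2.1) (by rw [edge_triple]; exact he)⟩
          (g.trimmed e he).2)
      obtain ⟨_, h2⟩ := hreach _ (Reach.trans (g.trimmed e he).1
        ⟨_, Lpath.single (l := e.2.1) (by rw [edge_triple]; exact he)⟩) (g.trimmed e he).2
      constructor
      · exact h1.tail ((mem_flow enc A).2 ⟨e, he, Or.inl ⟨rfl, rfl⟩⟩)
      · exact Relation.ReflTransGen.head ((mem_flow enc A).2 ⟨e, he, Or.inr ⟨rfl, rfl⟩⟩) h2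

lemma netOf_sm : IsStateMachine (netOf enc A) := by
  intro t ht
  obtain ⟨e, he, rfl⟩ := Finset.mem_image.1 ht
  rw [pre_tid enc A he, post_tid enc A he]
  simp

lemma netOf_separable (g : Good A) : Separable (netOf enc A) :=
  Separable.sm _ (netOf_wf enc A g) (netOf_sm enc A)

end NetOf

/-! ### Base automaton -/

def baseAuto (l : Option ℕ) : Auto Bool where
  edges := {(false, l, true)}
  start := false
  accept := true

lemma baseAuto_lang (l : Option ℕ) : aLang (baseAuto l) = {ocons l []} := by
  ext w
  constructor
  · intro hw
    cases hw with
    | @step a b c l' w' he hp =>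
      simp only [baseAuto, Finset.mem_singleton, Prod.mk.injEq] at he
      obtain ⟨_, rfl, rfl⟩ := he
      cases hp with
      | nil => rfl
      | step he2 _ =>
        simp only [baseAuto, Finset.mem_singleton, Prod.mk.injEq] at he2
        exact absurd he2.1 (by simp)
  · rintro rfl
    exact Lpath.single (by simp [baseAuto])

lemma baseAuto_pre (l : Option ℕ) : Pre (baseAuto l) := by
  refine ⟨by simp [baseAuto], ?_, ?_, ?_, ?_⟩
  · intro e he
    simp only [baseAuto, Finset.mem_singleton] at he
    subst he; simp
  · intro e he
    simp only [baseAuto, Finset.mem_singleton] at he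
    subst he; simp [baseAuto]
  · intro e he
    simp only [baseAuto, Finset.mem_singleton] at he
    subst he; simp [baseAuto]
  · rw [baseAuto_lang]; exact ⟨_, rfl⟩

lemma concatLangs_nonempty : ∀ (Ls : List (Set (List ℕ))), (∀ L ∈ Ls, L.Nonempty) →
    (ConcatLangs Ls).Nonempty := by
  intro Ls
  induction Ls with
  | nil => intro _; exact ⟨[], rfl⟩
  | cons L Ls ih =>
    intro h
    obtain ⟨u, hu⟩ := h L (by simp)
    obtain ⟨v, hv⟩ := ih (fun L' hL' => h L' (by simp [hL']))
    exact ⟨u ++ v, u, v, hu, hv, rfl⟩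

/-! ### The choice-graph automaton -/

section CG

variable {n : ℕ} {β : Fin n → Type} [∀ i, Fintype (β i)]
variable (sE eE : Set (Fin n)) (ed : Fin n → Fin n → Prop) (A : ∀ i, Auto (β i))

/-- State space for the choice-graph automaton. -/
abbrev CGS (β : Fin n → Type) : Type := Option (Option (Σ i, β i))

def cnode (i : Fin n) (s : β i) : CGS β := some (some ⟨i, s⟩)
def cstart : CGS β := none
def cend : CGS β := some none

@[simp] lemma cnode_ne_cstart (i : Fin n) (s : β i) : cnode i s ≠ cstart (β := β) := by
  simp [cnode, cstart]
@[simp] lemma cnode_ne_cend (i : Fin n) (s : β i) : cnode i s ≠ cend (β := β) := by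
  simp [cnode, cend]
@[simp] lemma cstart_ne_cend : cstart (β := β) ≠ cend := by simp [cstart, cend]

lemma cnode_inj {i j : Fin n} {s : β i} {t : β j} (h : cnode i s = cnode j t) :
    i = j ∧ HEq s t := by
  simp only [cnode, Option.some.injEq] at h
  exact Sigma.mk.inj_iff.1 h

lemma cnode_inj' {i : Fin n} {s t : β i} (h : cnode i s = cnode i t) : s = t :=
  eq_of_heq (cnode_inj h).2

def cgAuto : Auto (CGS β) where
  edges :=
    ((Finset.univ.filter fun i => i ∈ sE).image fun i =>
      (cstart, (none : Option ℕ), cnode i (A i).start)) ∪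
    (Finset.univ.biUnion fun i => (A i).edges.image fun e =>
      (cnode i e.1, e.2.1, cnode i e.2.2)) ∪
    (((Finset.univ ×ˢ Finset.univ).filter fun p : Fin n × Fin n => ed p.1 p.2).image fun p =>
      (cnode p.1 (A p.1).accept, (none : Option ℕ), cnode p.2 (A p.2).start)) ∪
    ((Finset.univ.filter fun i => i ∈ eE).image fun i =>
      (cnode i (A i).accept, (none : Option ℕ), cend))
  start := cstart
  accept := cend

lemma mem_cgAuto {x y : CGS β} {l : Option ℕ} :
    (x, l, y) ∈ (cgAuto sE eE ed A).edges ↔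
    (∃ i, i ∈ sE ∧ x = cstart ∧ l = none ∧ y = cnode i (A i).start) ∨
    (∃ i, ∃ e ∈ (A i).edges, x = cnode i e.1 ∧ l = e.2.1 ∧ y = cnode i e.2.2) ∨
    (∃ i j, ed i j ∧ x = cnode i (A i).accept ∧ l = none ∧ y = cnode j (A j).start) ∨
    (∃ i, i ∈ eE ∧ x = cnode i (A i).accept ∧ l = none ∧ y = cend) := by
  show _ ∈ _ ∪ _ ∪ _ ∪ _ ↔ _
  constructor
  · intro h
    rcases Finset.mem_union.1 h with h | h4
    · rcases Finset.mem_union.1 h with h | h3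
      · rcases Finset.mem_union.1 h with h1 | h2
        · obtain ⟨i, hi, heq⟩ := Finset.mem_image.1 h1
          rw [Finset.mem_filter] at hi
          rw [Prod.ext_iff] at heq; obtain ⟨e1, heq2⟩ := heq
          rw [Prod.ext_iff] at heq2; obtain ⟨e2, e3⟩ := heq2
          exact Or.inl ⟨i, hi.2, e1.symm, e2.symm, e3.symm⟩
        · obtain ⟨i, _, hmem⟩ := Finset.mem_biUnion.1 h2
          obtain ⟨e, he, heq⟩ := Finset.mem_image.1 hmem
          rw [Prod.ext_iff] at heq; obtain ⟨e1, heq2⟩ := heq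
          rw [Prod.ext_iff] at heq2; obtain ⟨e2, e3⟩ := heq2
          exact Or.inr (Or.inl ⟨i, e, he, e1.symm, e2.symm, e3.symm⟩)
      · obtain ⟨pq, hpq, heq⟩ := Finset.mem_image.1 h3
        rw [Finset.mem_filter] at hpq
        rw [Prod.ext_iff] at heq; obtain ⟨e1, heq2⟩ := heq
        rw [Prod.ext_iff] at heq2; obtain ⟨e2, e3⟩ := heq2
        exact Or.inr (Or.inr (Or.inl ⟨pq.1, pq.2, hpq.2, e1.symm, e2.symm, e3.symm⟩))
    · obtain ⟨i, hi, heq⟩ := Finset.mem_image.1 h4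
      rw [Finset.mem_filter] at hi
      rw [Prod.ext_iff] at heq; obtain ⟨e1, heq2⟩ := heq
      rw [Prod.ext_iff] at heq2; obtain ⟨e2, e3⟩ := heq2
      exact Or.inr (Or.inr (Or.inr ⟨i, hi.2, e1.symm, e2.symm, e3.symm⟩))
  · rintro (⟨i, hi, rfl, rfl, rfl⟩ | ⟨i, e, he, rfl, rfl, rfl⟩ | ⟨i, j, hij, rfl, rfl, rfl⟩ |
      ⟨i, hi, rfl, rfl, rfl⟩)
    · refine Finset.mem_union_left _ (Finset.mem_union_left _ (Finset.mem_union_left _ ?_))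
      exact Finset.mem_image_of_mem _ (Finset.mem_filter.2 ⟨Finset.mem_univ _, hi⟩)
    · refine Finset.mem_union_left _ (Finset.mem_union_left _ (Finset.mem_union_right _ ?_))
      exact Finset.mem_biUnion.2 ⟨i, Finset.mem_univ _, Finset.mem_image_of_mem _ he⟩
    · refine Finset.mem_union_left _ (Finset.mem_union_right _ ?_)
      refine Finset.mem_image.2 ⟨(i, j), Finset.mem_filter.2 ⟨?_, hij⟩, rfl⟩
      exact Finset.mem_product.2 ⟨Finset.mem_univ _, Finset.mem_univ _⟩
    · exact Finset.mem_union_right _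
        (Finset.mem_image_of_mem _ (Finset.mem_filter.2 ⟨Finset.mem_univ _, hi⟩))

lemma cg_lift {i : Fin n} {a b : β i} {w : List ℕ} (h : Lpath (A i) a w b) :
    Lpath (cgAuto sE eE ed A) (cnode i a) w (cnode i b) := by
  induction h with
  | nil => exact .nil _
  | @step a b' c l w he _ ih =>
    exact .step ((mem_cgAuto sE eE ed A).2 (Or.inr (Or.inl
      ⟨i, (a, l, b'), he, rfl, rfl, rfl⟩))) ih

lemma cend_run {w : List ℕ} {y : CGS β} (h : Lpath (cgAuto sE eE ed A) cend w y) :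
    w = [] ∧ y = cend := by
  cases h with
  | nil => exact ⟨rfl, rfl⟩
  | step he _ =>
    rw [mem_cgAuto] at he
    rcases he with ⟨i, _, h1, _⟩ | ⟨i, e, _, h1, _⟩ | ⟨i, j, _, h1, _⟩ | ⟨i, _, h1, _⟩
    · exact absurd h1.symm cstart_ne_cend
    · exact absurd h1.symm (cnode_ne_cend _ _)
    · exact absurd h1.symm (cnode_ne_cend _ _)
    · exact absurd h1.symm (cnode_ne_cend _ _)

/-- `p'` is a valid continuation of a choice-graph path after node `i`. -/
def Follows (i : Fin n) (p' : List (Fin n)) : Prop :=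
  List.Chain' ed (i :: p') ∧ (i :: p').getLast (List.cons_ne_nil _ _) ∈ eE

lemma cg_complete_aux :
    ∀ (p' : List (Fin n)) (i : Fin n), Follows eE ed i p' →
      ∀ σ ∈ ConcatLangs ((i :: p').map fun j => aLang (A j)),
        Lpath (cgAuto sE eE ed A) (cnode i (A i).start) σ cend := by
  intro p'
  induction p' with
  | nil =>
    rintro i ⟨hc, hl⟩ σ ⟨u, v, hu, hv, rfl⟩
    obtain rfl : v = [] := hv
    have h1 : Lpath (cgAuto sE eE ed A) (cnode i (A i).start) u (cnode i (A i).accept) :=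
      cg_lift sE eE ed A hu
    have h2 : Lpath (cgAuto sE eE ed A) (cnode i (A i).accept) [] cend := by
      refine Lpath.single (l := none) ((mem_cgAuto sE eE ed A).2 ?_)
      refine Or.inr (Or.inr (Or.inr ⟨i, ?_, rfl, rfl, rfl⟩))
      simpa using hl
    exact h1.trans h2
  | cons j p'' ih =>
    rintro i ⟨hc, hl⟩ σ ⟨u, v, hu, hv, rfl⟩
    replace hc := List.isChain_cons_cons.1 hc
    have h1 : Lpath (cgAuto sE eE ed A) (cnode i (A i).start) u (cnode i (A i).accept) :=
      cg_lift sE eE ed A hu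
    have h2 : Lpath (cgAuto sE eE ed A) (cnode i (A i).accept) [] (cnode j (A j).start) := by
      refine Lpath.single (l := none) ((mem_cgAuto sE eE ed A).2 ?_)
      exact Or.inr (Or.inr (Or.inl ⟨i, j, hc.1, rfl, rfl, rfl⟩))
    have h3 : Lpath (cgAuto sE eE ed A) (cnode j (A j).start) v cend := by
      refine ih j ⟨hc.2, ?_⟩ v hv
      rwa [List.getLast_cons (List.cons_ne_nil _ _)] at hl
    have := (h1.trans h2).trans h3
    simpa using this

lemma cg_sound_aux (hA : ∀ i, Pre (A i)) :
    ∀ {x y : CGS β} {w : List ℕ}, Lpath (cgAuto sE eE ed A) x w y → y = cend →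
      ∀ (i : Fin n) (s : β i), x = cnode i s →
      ∃ u q p', Lpath (A i) s u (A i).accept ∧ Follows eE ed i p' ∧
        q ∈ ConcatLangs (p'.map fun j => aLang (A j)) ∧ w = u ++ q := by
  intro x y w h
  induction h with
  | nil =>
    rintro rfl i s hx
    exact absurd hx (Ne.symm (cnode_ne_cend _ _))
  | @step x m yy l w' he hp ih =>
    rintro rfl i s rfl
    rw [mem_cgAuto] at he
    rcases he with ⟨i', _, h1, _⟩ | ⟨i', e, hee, h1, h2, h3⟩ |
        ⟨i', j, hij, h1, h2, h3⟩ | ⟨i', hi', h1, h2, h3⟩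
    · exact absurd h1 (cnode_ne_cstart _ _)
    · obtain ⟨hii, hq⟩ := cnode_inj h1
      subst hii
      obtain rfl : s = e.1 := eq_of_heq hq
      subst h3
      obtain ⟨u, q, p', hu, hf, hq2, hw⟩ := ih rfl i e.2.2 rfl
      refine ⟨ocons e.2.1 u, q, p', ?_, hf, hq2, ?_⟩
      · exact .step (by rw [edge_triple]; exact hee) hu
      · rw [h2, hw, ocons_append]
    · obtain ⟨hii, hq⟩ := cnode_inj h1
      subst hii
      obtain rfl : s = (A i).accept := eq_of_heq hq
      subst h3
      obtain ⟨u, q, p', hu, hf, hq2, hw⟩ := ih rfl j (A j).start rfl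
      refine ⟨[], w', j :: p', .nil _, ⟨?_, ?_⟩, ⟨u, q, hu, hq2, hw⟩, by rw [h2]; rfl⟩
      · exact List.isChain_cons_cons.2 ⟨hij, hf.1⟩
      · rw [List.getLast_cons (List.cons_ne_nil _ _)]
        exact hf.2
    · obtain ⟨hii, hq⟩ := cnode_inj h1
      subst hii
      obtain rfl : s = (A i).accept := eq_of_heq hq
      subst h3
      obtain ⟨rfl, _⟩ := cend_run sE eE ed A hp
      refine ⟨[], [], [], .nil _, ⟨List.isChain_singleton _, by simpa using hi'⟩, rfl, ?_⟩
      rw [h2]; simp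

lemma cg_lang (hA : ∀ i, Pre (A i)) :
    aLang (cgAuto sE eE ed A) =
      {σ | ∃ p, CGPath sE eE ed p ∧ σ ∈ ConcatLangs (p.map fun j => aLang (A j))} := by
  ext σ
  constructor
  · intro hσ
    cases hσ with
    | @step x m yy l w' he hp =>
      rw [mem_cgAuto] at he
      rcases he with ⟨i, hi, _, h2, h3⟩ | ⟨i, e, _, h1, _⟩ | ⟨i, j, _, h1, _⟩ | ⟨i, _, h1, _⟩
      · subst h3
        obtain ⟨u, q, p', hu, hf, hq2, hw⟩ := cg_sound_aux sE eE ed A hA hp rfl i _ rfl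
        refine ⟨i :: p', ⟨List.cons_ne_nil _ _, by simpa using hi, hf.2, hf.1⟩, ?_⟩
        refine ⟨u, q, hu, hq2, ?_⟩
        rw [h2, hw]; rfl
      · exact absurd h1.symm (cnode_ne_cstart _ _)
      · exact absurd h1.symm (cnode_ne_cstart _ _)
      · exact absurd h1.symm (cnode_ne_cstart _ _)
  · rintro ⟨p, ⟨hne, hh, hl, hc⟩, hσ⟩
    obtain ⟨i, p', rfl⟩ := List.exists_cons_of_ne_nil hne
    have hstep : Lpath (cgAuto sE eE ed A) cstart σ cend := by
      have h0 : (cstart, (none : Option ℕ), cnode i (A i).start) ∈ (cgAuto sE eE ed A).edges :=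
        (mem_cgAuto sE eE ed A).2 (Or.inl ⟨i, by simpa using hh, rfl, rfl, rfl⟩)
      exact .step h0 (cg_complete_aux sE eE ed A p' i ⟨hc, hl⟩ σ hσ)
    exact hstep

lemma cg_pre (hA : ∀ i, Pre (A i)) (hne : (aLang (cgAuto sE eE ed A)).Nonempty) :
    Pre (cgAuto sE eE ed A) := by
  refine ⟨cstart_ne_cend, ?_, ?_, ?_, hne⟩
  · rintro ⟨x, l, y⟩ he
    rw [mem_cgAuto] at he
    dsimp only
    rcases he with ⟨i, _, rfl, _, rfl⟩ | ⟨i, e, hee, rfl, _, rfl⟩ |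
        ⟨i, j, _, rfl, _, rfl⟩ | ⟨i, _, rfl, _, rfl⟩
    · exact (cnode_ne_cstart _ _).symm
    · intro hh
      exact (hA i).noself e hee (cnode_inj' hh)
    · intro hh
      obtain ⟨rfl, hq⟩ := cnode_inj hh
      exact (hA i).nese (eq_of_heq hq).symm
    · exact cnode_ne_cend _ _
  · rintro ⟨x, l, y⟩ he
    rw [mem_cgAuto] at he
    dsimp only
    rcases he with ⟨i, _, rfl, _, rfl⟩ | ⟨i, e, hee, rfl, _, rfl⟩ |
        ⟨i, j, _, rfl, _, rfl⟩ | ⟨i, _, rfl, _, rfl⟩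
    · exact cnode_ne_cstart _ _
    · exact cnode_ne_cstart _ _
    · exact cnode_ne_cstart _ _
    · exact cstart_ne_cend.symm
  · rintro ⟨x, l, y⟩ he
    rw [mem_cgAuto] at he
    dsimp only
    rcases he with ⟨i, _, rfl, _, rfl⟩ | ⟨i, e, hee, rfl, _, rfl⟩ |
        ⟨i, j, _, rfl, _, rfl⟩ | ⟨i, _, rfl, _, rfl⟩
    · exact cstart_ne_cend
    · exact cnode_ne_cend _ _
    · exact cnode_ne_cend _ _
    · exact cnode_ne_cend _ _

end CG

/-! ### The partial-order (shuffle) automaton -/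

section PO

variable {n : ℕ} (rel : Fin n → Fin n → Prop) {β : Fin n → Type} [∀ i, Fintype (β i)]
variable (A : ∀ i, Auto (β i))

def poAuto : Auto (∀ i, Option (β i)) where
  edges :=
    (Finset.univ.biUnion fun i =>
      (((A i).edges ×ˢ (Finset.univ : Finset (∀ j, Option (β j)))).filter fun q =>
        q.2 i = some q.1.1 ∧ ∀ j, rel j i → q.2 j = none).image fun q =>
        (q.2, q.1.2.1, Function.update q.2 i (some q.1.2.2)))
    ∪ (Finset.univ.biUnion fun i =>
      ((Finset.univ : Finset (∀ j, Option (β j))).filter fun f => f i = some (A i).accept).image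
        fun f => (f, (none : Option ℕ), Function.update f i none))
  start := fun i => some (A i).start
  accept := fun _ => none

lemma mem_poAuto {f g : ∀ i, Option (β i)} {l : Option ℕ} :
    (f, l, g) ∈ (poAuto rel A).edges ↔
    (∃ i a b, (a, l, b) ∈ (A i).edges ∧ f i = some a ∧ (∀ j, rel j i → f j = none) ∧
      g = Function.update f i (some b)) ∨
    (∃ i, f i = some (A i).accept ∧ l = none ∧ g = Function.update f i none) := by
  show _ ∈ _ ∪ _ ↔ _
  constructor
  · intro h
    rcases Finset.mem_union.1 h with h | h
    · obtain ⟨i, _, hm⟩ := Finset.mem_biUnion.1 h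
      obtain ⟨q, hq, heq⟩ := Finset.mem_image.1 hm
      rw [Finset.mem_filter] at hq
      obtain ⟨hq1, hq2, hq3⟩ := hq
      rw [Prod.ext_iff] at heq; obtain ⟨e1, heq2⟩ := heq
      rw [Prod.ext_iff] at heq2; obtain ⟨e2, e3⟩ := heq2
      dsimp only at e1 e2 e3
      subst e1
      refine Or.inl ⟨i, q.1.1, q.1.2.2, ?_, hq2, hq3, e3.symm⟩
      rw [← e2, edge_triple]
      exact (Finset.mem_product.1 hq1).1
    · obtain ⟨i, _, hm⟩ := Finset.mem_biUnion.1 h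
      obtain ⟨f', hf', heq⟩ := Finset.mem_image.1 hm
      rw [Finset.mem_filter] at hf'
      rw [Prod.ext_iff] at heq; obtain ⟨e1, heq2⟩ := heq
      rw [Prod.ext_iff] at heq2; obtain ⟨e2, e3⟩ := heq2
      dsimp only at e1 e2 e3
      subst e1
      exact Or.inr ⟨i, hf'.2, e2.symm, e3.symm⟩
  · rintro (⟨i, a, b, he, hfi, hgate, rfl⟩ | ⟨i, hfi, rfl, rfl⟩)
    · refine Finset.mem_union_left _ (Finset.mem_biUnion.2 ⟨i, Finset.mem_univ _, ?_⟩)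
      refine Finset.mem_image.2 ⟨((a, l, b), f), Finset.mem_filter.2 ⟨?_, hfi, hgate⟩, rfl⟩
      exact Finset.mem_product.2 ⟨he, Finset.mem_univ _⟩
    · refine Finset.mem_union_right _ (Finset.mem_biUnion.2 ⟨i, Finset.mem_univ _, ?_⟩)
      exact Finset.mem_image.2 ⟨f, Finset.mem_filter.2 ⟨Finset.mem_univ _, hfi⟩, rfl⟩

/-- The index-ordering condition of `IsShuffle`. -/
def Ord (W : List (Fin n × ℕ)) : Prop :=
  ∀ a b : Fin W.length, rel (W.get a).1 (W.get b).1 → (a : ℕ) < (b : ℕ)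

lemma ord_tail {i : Fin n} {x : ℕ} {W : List (Fin n × ℕ)} (h : Ord rel ((i, x) :: W)) :
    Ord rel W := by
  intro a b hr
  have := h a.succ b.succ (by simpa using hr)
  simpa using this

lemma ord_not_mem_of_rel {i : Fin n} {x : ℕ} {W : List (Fin n × ℕ)}
    (h : Ord rel ((i, x) :: W)) {j : Fin n} (hj : rel j i) (y : ℕ) : (j, y) ∉ W := by
  intro hy
  obtain ⟨k, hk⟩ := List.mem_iff_get.1 hy
  rw [List.get_eq_getElem] at hk
  have h0 := h k.succ ⟨0, Nat.succ_pos _⟩ (by simpa [hk] using hj)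
  simp at h0

lemma ord_cons (hirr : Irreflexive rel) {i : Fin n} {x : ℕ} {W : List (Fin n × ℕ)}
    (h : Ord rel W) (habs : ∀ j y, (j, y) ∈ W → ¬ rel j i) : Ord rel ((i, x) :: W) := by
  intro a b hr
  rcases Fin.eq_zero_or_eq_succ a with rfl | ⟨a', rfl⟩
  · rcases Fin.eq_zero_or_eq_succ b with rfl | ⟨b', rfl⟩
    · exact absurd hr (by simpa using hirr i)
    · simp
  · rcases Fin.eq_zero_or_eq_succ b with rfl | ⟨b', rfl⟩
    · exfalso
      refine habs (W.get a').1 (W.get a').2 (by simp [List.get_mem]) ?_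
      simpa using hr
    · have := h a' b' (by simpa using hr)
      simpa using this

lemma po_lift (hirr : Irreflexive rel) {i : Fin n} {s t : β i} {w : List ℕ}
    (h : Lpath (A i) s w t) :
    ∀ f : ∀ j, Option (β j), f i = some s → (∀ k, rel k i → f k = none) →
      Lpath (poAuto rel A) f w (Function.update f i (some t)) := by
  induction h with
  | nil =>
    rename_i a0
    intro f hf hg
    have : Function.update f i (some a0) = f := by
      funext j
      by_cases hj : j = i
      · subst hj; rw [Function.update_self, hf]
      · rw [Function.update_of_ne hj]
    rw [this]
    exact .nil _
  | @step a b c l w he _ ih =>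
    intro f hf hg
    have hedge : (f, l, Function.update f i (some b)) ∈ (poAuto rel A).edges :=
      (mem_poAuto rel A).2 (Or.inl ⟨i, a, b, he, hf, hg, rfl⟩)
    have hrest := ih (Function.update f i (some b)) (Function.update_self _ _ _)
      (fun k hk => by
        rw [Function.update_of_ne (fun hh : _ = i => hirr i (by rw [hh] at hk; exact hk))]
        exact hg k hk)
    rw [Function.update_idem] at hrest
    exact .step hedge hrest

lemma po_flush (hirr : Irreflexive rel) (htr : Transitive rel) :
    ∀ (k : ℕ) (J : Finset (Fin n)) (f : ∀ i, Option (β i)),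
      (J.filter fun j => f j ≠ none).card ≤ k →
      (∀ j ∈ J, ∀ i, rel i j → i ∈ J) →
      (∀ j ∈ J, ∀ s, f j = some s → Lpath (A j) s [] (A j).accept) →
      Lpath (poAuto rel A) f [] (fun j => if j ∈ J then none else f j) := by
  have hwf : WellFounded rel := by
    haveI : IsTrans (Fin n) rel := ⟨fun _ _ _ h1 h2 => htr h1 h2⟩
    haveI : IsIrrefl (Fin n) rel := ⟨hirr⟩
    exact Finite.wellFounded_of_trans_of_irrefl rel
  intro k
  induction k with
  | zero =>
    intro J f hcard _ _
    have hemp : (J.filter fun j => f j ≠ none) = ∅ := Finset.card_eq_zero.1 (Nat.le_zero.1 hcard)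
    have : (fun j => if j ∈ J then none else f j) = f := by
      funext j
      by_cases hj : j ∈ J
      · rw [if_pos hj]
        by_contra hne
        have : j ∈ J.filter fun j => f j ≠ none :=
          Finset.mem_filter.2 ⟨hj, fun hh => hne hh.symm⟩
        rw [hemp] at this
        exact absurd this (Finset.notMem_empty _)
      · rw [if_neg hj]
    rw [this]
    exact .nil _
  | succ k ih =>
    intro J f hcard hJd hpaths
    by_cases hemp : (J.filter fun j => f j ≠ none) = ∅
    · have : (fun j => if j ∈ J then none else f j) = f := by
        funext j
        by_cases hj : j ∈ J
        · rw [if_pos hj]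
          by_contra hne
          have : j ∈ J.filter fun j => f j ≠ none :=
            Finset.mem_filter.2 ⟨hj, fun hh => hne hh.symm⟩
          rw [hemp] at this
          exact absurd this (Finset.notMem_empty _)
        · rw [if_neg hj]
      rw [this]
      exact .nil _
    · obtain ⟨u, hu, hmin⟩ := hwf.has_min {x | x ∈ J.filter fun j => f j ≠ none}
        (by
          obtain ⟨u, hu⟩ := Finset.nonempty_of_ne_empty hemp
          exact ⟨u, hu⟩)
      obtain ⟨huJ, hune⟩ := Finset.mem_filter.1 hu
      obtain ⟨s, hs⟩ := Option.ne_none_iff_exists'.1 hune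
      have hgate : ∀ k', rel k' u → f k' = none := by
        intro k' hk'
        by_contra hne2
        exact hmin k' (Finset.mem_filter.2 ⟨hJd u huJ k' hk', hne2⟩) hk'
      have hrun : Lpath (poAuto rel A) f [] (Function.update f u (some (A u).accept)) :=
        po_lift rel A hirr (hpaths u huJ s hs) f hs hgate
      have hfin : (Function.update f u (some (A u).accept), (none : Option ℕ),
          Function.update f u none) ∈ (poAuto rel A).edges := by
        refine (mem_poAuto rel A).2 (Or.inr ⟨u, Function.update_self _ _ _, rfl, ?_⟩)
        rw [Function.update_idem]
      have hstep : Lpath (poAuto rel A) (Function.update f u (some (A u).accept)) []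
          (Function.update f u none) := Lpath.single hfin
      have hcard2 : ((J.filter fun j => Function.update f u none j ≠ none).card ≤ k) := by
        have hset : (J.filter fun j => Function.update f u none j ≠ none) =
            (J.filter fun j => f j ≠ none).erase u := by
          ext j
          rw [Finset.mem_erase, Finset.mem_filter, Finset.mem_filter]
          constructor
          · intro ⟨hj, hne2⟩
            by_cases hju : j = u
            · subst hju; rw [Function.update_self] at hne2; exact absurd rfl hne2
            · rw [Function.update_of_ne hju] at hne2; exact ⟨hju, hj, hne2⟩
          · intro ⟨hju, hj, hne2⟩
            rw [Function.update_of_ne hju]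
            exact ⟨hj, hne2⟩
        rw [hset, Finset.card_erase_of_mem hu]
        omega
      have hrec := ih J (Function.update f u none) hcard2 hJd
        (by
          intro j hj s' hs'
          by_cases hju : j = u
          · subst hju; rw [Function.update_self] at hs'; cases hs'
          · rw [Function.update_of_ne hju] at hs'
            exact hpaths j hj s' hs')
      have htgt : (fun j => if j ∈ J then none else Function.update f u none j) =
          (fun j => if j ∈ J then none else f j) := by
        funext j
        by_cases hj : j ∈ J
        · rw [if_pos hj, if_pos hj]
        · rw [if_neg hj, if_neg hj, Function.update_of_ne (fun hh : j = u => hj (hh.symm ▸ huJ))]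
      rw [htgt] at hrec
      exact (hrun.trans (hstep.trans hrec) : Lpath _ _ ([] ++ ([] ++ [])) _)

lemma po_run (hirr : Irreflexive rel) (htr : Transitive rel) :
    ∀ (k : ℕ) (f : ∀ i, Option (β i)),
      (Finset.univ.filter fun j => f j ≠ none).card ≤ k →
      (∀ j, ∀ s, f j = some s → ∃ w, Lpath (A j) s w (A j).accept) →
      ∃ w, Lpath (poAuto rel A) f w (poAuto rel A).accept := by
  have hwf : WellFounded rel := by
    haveI : IsTrans (Fin n) rel := ⟨fun _ _ _ h1 h2 => htr h1 h2⟩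
    haveI : IsIrrefl (Fin n) rel := ⟨hirr⟩
    exact Finite.wellFounded_of_trans_of_irrefl rel
  intro k
  induction k with
  | zero =>
    intro f hcard _
    have hemp : (Finset.univ.filter fun j => f j ≠ none) = ∅ :=
      Finset.card_eq_zero.1 (Nat.le_zero.1 hcard)
    have : f = (poAuto rel A).accept := by
      funext j
      by_contra hne
      have : j ∈ Finset.univ.filter fun j => f j ≠ none :=
        Finset.mem_filter.2 ⟨Finset.mem_univ _, hne⟩
      rw [hemp] at this
      exact absurd this (Finset.notMem_empty _)
    rw [this]
    exact ⟨[], .nil _⟩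
  | succ k ih =>
    intro f hcard hpaths
    by_cases hemp : (Finset.univ.filter fun j => f j ≠ none) = ∅
    · have : f = (poAuto rel A).accept := by
        funext j
        by_contra hne
        have : j ∈ Finset.univ.filter fun j => f j ≠ none :=
          Finset.mem_filter.2 ⟨Finset.mem_univ _, hne⟩
        rw [hemp] at this
        exact absurd this (Finset.notMem_empty _)
      rw [this]
      exact ⟨[], .nil _⟩
    · obtain ⟨u, hu, hmin⟩ := hwf.has_min {x | x ∈ Finset.univ.filter fun j => f j ≠ none}
        (by
          obtain ⟨u, hu⟩ := Finset.nonempty_of_ne_empty hemp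
          exact ⟨u, hu⟩)
      obtain ⟨_, hune⟩ := Finset.mem_filter.1 (show u ∈ Finset.univ.filter fun j => f j ≠ none from hu)
      obtain ⟨s, hs⟩ := Option.ne_none_iff_exists'.1 hune
      have hgate : ∀ k', rel k' u → f k' = none := by
        intro k' hk'
        by_contra hne2
        exact hmin k' (show k' ∈ Finset.univ.filter fun j => f j ≠ none from Finset.mem_filter.2 ⟨Finset.mem_univ _, hne2⟩) hk'
      obtain ⟨w₀, hw₀⟩ := hpaths u s hs
      have hrun : Lpath (poAuto rel A) f w₀ (Function.update f u (some (A u).accept)) :=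
        po_lift rel A hirr hw₀ f hs hgate
      have hfin : (Function.update f u (some (A u).accept), (none : Option ℕ),
          Function.update f u none) ∈ (poAuto rel A).edges := by
        refine (mem_poAuto rel A).2 (Or.inr ⟨u, Function.update_self _ _ _, rfl, ?_⟩)
        rw [Function.update_idem]
      have hstep : Lpath (poAuto rel A) (Function.update f u (some (A u).accept)) []
          (Function.update f u none) := Lpath.single hfin
      have hcard2 : ((Finset.univ.filter fun j => Function.update f u none j ≠ none).card ≤ k) := by
        have hset : (Finset.univ.filter fun j => Function.update f u none j ≠ none) =
            (Finset.univ.filter fun j => f j ≠ none).erase u := by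
          ext j
          rw [Finset.mem_erase, Finset.mem_filter, Finset.mem_filter]
          constructor
          · intro ⟨hj, hne2⟩
            by_cases hju : j = u
            · subst hju; rw [Function.update_self] at hne2; exact absurd rfl hne2
            · rw [Function.update_of_ne hju] at hne2; exact ⟨hju, hj, hne2⟩
          · intro ⟨hju, hj, hne2⟩
            rw [Function.update_of_ne hju]
            exact ⟨hj, hne2⟩
        rw [hset, Finset.card_erase_of_mem hu]
        omega
      obtain ⟨w₁, hw₁⟩ := ih (Function.update f u none) hcard2
        (by
          intro j s' hs'
          by_cases hju : j = u
          · subst hju; rw [Function.update_self] at hs'; cases hs'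
          · rw [Function.update_of_ne hju] at hs'
            exact hpaths j s' hs')
      exact ⟨w₀ ++ ([] ++ w₁), hrun.trans (hstep.trans hw₁)⟩

lemma po_sound_aux (hirr : Irreflexive rel) :
    ∀ {f g : ∀ i, Option (β i)} {w : List ℕ}, Lpath (poAuto rel A) f w g →
      g = (poAuto rel A).accept →
      ∃ W : List (Fin n × ℕ), w = W.map Prod.snd ∧ Ord rel W ∧
        (∀ i s, f i = some s →
          Lpath (A i) s ((W.filter fun x => x.1 = i).map Prod.snd) (A i).accept) ∧
        (∀ i, f i = none → (W.filter fun x => x.1 = i) = []) := by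
  intro f g w h
  induction h with
  | nil =>
    rintro rfl
    refine ⟨[], rfl, fun a => a.elim0, ?_, fun i _ => rfl⟩
    intro i s hs
    cases hs
  | @step f m g l w' he hp ih =>
    rintro rfl
    rw [mem_poAuto] at he
    obtain ⟨W', hw', hOrd', hsome', hnone'⟩ := ih rfl
    rcases he with ⟨i, a, b, hee, hfi, hgate, hupd⟩ | ⟨i, hacc, rfl, hupd⟩
    · subst hupd
      have habs : ∀ j y, (j, y) ∈ W' → ¬ rel j i := by
        intro j y hjy hr
        have hji : j ≠ i := fun hh => hirr i (hh ▸ hr)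
        have hupdj : Function.update f i (some b) j = none := by
          rw [Function.update_of_ne hji]
          exact hgate j hr
        have hmem2 : (j, y) ∈ W'.filter (fun x => x.1 = j) :=
          List.mem_filter.2 ⟨hjy, by simp⟩
        rw [hnone' j hupdj] at hmem2
        exact absurd hmem2 List.not_mem_nil
      have hWi : ∀ i' : Fin n, i' ≠ i →
          (Function.update f i (some b) i' = f i') := fun i' hii =>
        Function.update_of_ne hii _ _
      cases l with
      | some x =>
        refine ⟨(i, x) :: W', by simp [hw'], ord_cons rel hirr hOrd' habs, ?_, ?_⟩
        · intro i' s hs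
          by_cases hii : i' = i
          · subst hii
            obtain rfl : s = a := by rw [hfi] at hs; exact (Option.some.inj hs).symm
            have hpath' := hsome' i' b (by rw [Function.update_self])
            have hfil : (((i', x) :: W').filter fun y => y.1 = i') =
                (i', x) :: W'.filter (fun y => y.1 = i') := by simp
            rw [hfil]
            exact .step hee hpath'
          · have hfil : (((i, x) :: W').filter fun y => y.1 = i') =
                W'.filter (fun y => y.1 = i') := List.filter_cons_of_neg (by
              simp only [decide_eq_true_eq]
              exact fun hh => hii hh.symm)
            rw [hfil]
            exact hsome' i' s (by rw [hWi i' hii]; exact hs)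
        · intro i' hn2
          by_cases hii : i' = i
          · subst hii; rw [hfi] at hn2; cases hn2
          · have hfil : (((i, x) :: W').filter fun y => y.1 = i') =
                W'.filter (fun y => y.1 = i') := List.filter_cons_of_neg (by
              simp only [decide_eq_true_eq]
              exact fun hh => hii hh.symm)
            rw [hfil]
            exact hnone' i' (by rw [hWi i' hii]; exact hn2)
      | none =>
        refine ⟨W', by simpa using hw', hOrd', ?_, ?_⟩
        · intro i' s hs
          by_cases hii : i' = i
          · subst hii
            obtain rfl : s = a := by rw [hfi] at hs; exact (Option.some.inj hs).symm
            have hpath' := hsome' i' b (by rw [Function.update_self])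
            exact .step hee hpath'
          · exact hsome' i' s (by rw [hWi i' hii]; exact hs)
        · intro i' hn2
          by_cases hii : i' = i
          · subst hii; rw [hfi] at hn2; cases hn2
          · exact hnone' i' (by rw [hWi i' hii]; exact hn2)
    · subst hupd
      refine ⟨W', by simpa using hw', hOrd', ?_, ?_⟩
      · intro i' s hs
        by_cases hii : i' = i
        · subst hii
          obtain rfl : s = (A i').accept := by rw [hacc] at hs; exact (Option.some.inj hs).symm
          have hfil : W'.filter (fun x => x.1 = i') = [] :=
            hnone' i' (by rw [Function.update_self])
          rw [hfil]
          exact .nil _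
        · exact hsome' i' s (by rw [Function.update_of_ne hii]; exact hs)
      · intro i' hn2
        by_cases hii : i' = i
        · subst hii
          exact hnone' i' (by rw [Function.update_self])
        · exact hnone' i' (by rw [Function.update_of_ne hii]; exact hn2)

lemma po_complete_aux (hirr : Irreflexive rel) (htr : Transitive rel) :
    ∀ (W : List (Fin n × ℕ)) (f : ∀ i, Option (β i)), Ord rel W →
      (∀ i s, f i = some s →
        Lpath (A i) s ((W.filter fun x => x.1 = i).map Prod.snd) (A i).accept) →
      (∀ i, f i = none → (W.filter fun x => x.1 = i) = []) →
      Lpath (poAuto rel A) f (W.map Prod.snd) (poAuto rel A).accept := by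
  intro W
  induction W with
  | nil =>
    intro f _ hsome _
    have h1 := po_flush rel A hirr htr (Finset.univ.filter fun j => f j ≠ none).card
      Finset.univ f le_rfl (fun _ _ _ _ => Finset.mem_univ _)
      (fun j _ s hs => by simpa using hsome j s hs)
    have h2 : (fun j => if j ∈ (Finset.univ : Finset (Fin n)) then none else f j) =
        (poAuto rel A).accept := by
      funext j
      rw [if_pos (Finset.mem_univ _)]
      rfl
    rw [h2] at h1
    exact h1
  | cons hd W' ih =>
    obtain ⟨i, x⟩ := hd
    intro f hOrd hsome hnone
    have hnoent : ∀ j, rel j i → (W'.filter fun y => y.1 = j) = [] := by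
      intro j hr
      rw [List.filter_eq_nil_iff]
      intro y hy
      simp only [decide_eq_true_eq]
      intro hh
      exact ord_not_mem_of_rel rel hOrd hr y.2 (by rw [← hh]; simpa using hy)
    have hnoentW : ∀ j, rel j i → ((((i, x) :: W').filter fun y => y.1 = j) = []) := by
      intro j hr
      have hji : j ≠ i := fun hh => hirr i (hh ▸ hr)
      have h1 : ((((i, x) :: W')).filter fun y => y.1 = j) = W'.filter fun y => y.1 = j := List.filter_cons_of_neg (by
        simp only [decide_eq_true_eq]
        exact fun hh => hji hh.symm)
      rw [h1]
      exact hnoent j hr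
    have hJd : ∀ j ∈ (Finset.univ.filter fun j => rel j i), ∀ k, rel k j →
        k ∈ (Finset.univ.filter fun j => rel j i) := by
      intro j hj k hk
      rw [Finset.mem_filter] at hj ⊢
      exact ⟨Finset.mem_univ _, htr hk hj.2⟩
    have hflush := po_flush rel A hirr htr _ (Finset.univ.filter fun j => rel j i) f le_rfl hJd
      (by
        intro j hj s hs
        rw [Finset.mem_filter] at hj
        have := hsome j s hs
        rw [hnoentW j hj.2] at this
        exact this)
    set f₁ := fun j => if j ∈ (Finset.univ.filter fun j => rel j i) then none else f j with hf₁
    have hf1i : f₁ i = f i := by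
      rw [hf₁]
      simp only [Finset.mem_filter, Finset.mem_univ, true_and]
      rw [if_neg (hirr i)]
    obtain ⟨s, hs⟩ : ∃ s, f i = some s := by
      cases hfi : f i with
      | none =>
        exfalso
        have := hnone i hfi
        simp at this
      | some s => exact ⟨s, rfl⟩
    have hpath : Lpath (A i) s (x :: (W'.filter fun y => y.1 = i).map Prod.snd) (A i).accept := by
      have h1 := hsome i s hs
      have hfil : (((i, x) :: W').filter fun y => y.1 = i) =
          (i, x) :: W'.filter (fun y => y.1 = i) := by simp
      rwa [hfil] at h1
    obtain ⟨a', b', heps, hedge, hrest⟩ := Lpath.cons_decomp hpath rfl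
    have hgate1 : ∀ k, rel k i → f₁ k = none := by
      intro k hk
      rw [hf₁]
      simp only [Finset.mem_filter, Finset.mem_univ, true_and]
      rw [if_pos hk]
    have hlift : Lpath (poAuto rel A) f₁ [] (Function.update f₁ i (some a')) :=
      po_lift rel A hirr heps f₁ (by rw [hf1i]; exact hs) hgate1
    have hgate2 : ∀ k, rel k i → Function.update f₁ i (some a') k = none := by
      intro k hk
      rw [Function.update_of_ne (fun hh : _ = i => hirr i (by rw [hh] at hk; exact hk))]
      exact hgate1 k hk
    have hstepedge : (Function.update f₁ i (some a'), some x,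
        Function.update (Function.update f₁ i (some a')) i (some b')) ∈ (poAuto rel A).edges :=
      (mem_poAuto rel A).2 (Or.inl ⟨i, a', b', hedge, Function.update_self _ _ _, hgate2, rfl⟩)
    rw [Function.update_idem] at hstepedge
    have hIH : Lpath (poAuto rel A) (Function.update f₁ i (some b')) (W'.map Prod.snd)
        (poAuto rel A).accept := by
      refine ih (Function.update f₁ i (some b')) (ord_tail rel hOrd) ?_ ?_
      · intro i' s' hs'
        by_cases hii : i' = i
        · subst hii
          rw [Function.update_self] at hs'
          obtain rfl : s' = b' := (Option.some.inj hs').symm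
          exact hrest
        · rw [Function.update_of_ne hii] at hs'
          rw [hf₁] at hs'
          simp only [Finset.mem_filter, Finset.mem_univ, true_and] at hs'
          by_cases hri : rel i' i
          · rw [if_pos hri] at hs'
            cases hs'
          · rw [if_neg hri] at hs'
            have h1 := hsome i' s' hs'
            have hfil : (((i, x) :: W').filter fun y => y.1 = i') =
                W'.filter (fun y => y.1 = i') := List.filter_cons_of_neg (by
              simp only [decide_eq_true_eq]
              exact fun hh => hii hh.symm)
            rwa [hfil] at h1
      · intro i' hn2
        by_cases hii : i' = i
        · subst hii
          rw [Function.update_self] at hn2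
          cases hn2
        · rw [Function.update_of_ne hii] at hn2
          rw [hf₁] at hn2
          simp only [Finset.mem_filter, Finset.mem_univ, true_and] at hn2
          by_cases hri : rel i' i
          · exact hnoent i' hri
          · rw [if_neg hri] at hn2
            have h1 := hnone i' hn2
            have hfil : (((i, x) :: W').filter fun y => y.1 = i') =
                W'.filter (fun y => y.1 = i') := List.filter_cons_of_neg (by
              simp only [decide_eq_true_eq]
              exact fun hh => hii hh.symm)
            rwa [hfil] at h1
    have hfinal := hflush.trans (hlift.trans (Lpath.step hstepedge hIH))
    simpa using hfinal

lemma po_lang (hirr : Irreflexive rel) (htr : Transitive rel) :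
    aLang (poAuto rel A) =
      {σ | ∃ F : Fin n → List ℕ, (∀ i, F i ∈ aLang (A i)) ∧ IsShuffle rel F σ} := by
  ext σ
  constructor
  · intro hσ
    obtain ⟨W, hw, hOrd, hsome, _⟩ := po_sound_aux rel A hirr hσ rfl
    refine ⟨fun i => (W.filter fun x => x.1 = i).map Prod.snd, ?_, W, hw, fun i => rfl, hOrd⟩
    intro i
    exact hsome i (A i).start rfl
  · rintro ⟨F, hF, W, hσ, hfil, hord⟩
    subst hσ
    refine po_complete_aux rel A hirr htr W (poAuto rel A).start hord ?_ ?_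
    · intro i s hs
      obtain rfl : s = (A i).start := (Option.some.inj hs).symm
      rw [hfil i]
      exact hF i
    · intro i hn2
      cases hn2

lemma po_pre (hn : 1 ≤ n) (hirr : Irreflexive rel) (htr : Transitive rel)
    (hA : ∀ i, Pre (A i)) : Pre (poAuto rel A) := by
  have hne0 : (poAuto rel A).start ≠ (poAuto rel A).accept := by
    intro hh
    have := congrFun hh ⟨0, hn⟩
    cases this
  refine ⟨hne0, ?_, ?_, ?_, ?_⟩
  · rintro ⟨f, l, g⟩ he
    rw [mem_poAuto] at he
    dsimp only
    rcases he with ⟨i, a, b, hee, hfi, _, rfl⟩ | ⟨i, hfi, _, rfl⟩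
    · intro hh
      have := congrFun hh i
      rw [Function.update_self, hfi] at this
      exact (hA i).noself (a, l, b) hee (show a = b from Option.some.inj this)
    · intro hh
      have := congrFun hh i
      rw [Function.update_self, hfi] at this
      cases this
  · rintro ⟨f, l, g⟩ he
    rw [mem_poAuto] at he
    dsimp only
    rcases he with ⟨i, a, b, hee, hfi, _, rfl⟩ | ⟨i, hfi, _, rfl⟩
    · intro hh
      have := congrFun hh i
      rw [Function.update_self] at this
      exact (hA i).noin (a, l, b) hee (show b = (A i).start from Option.some.inj this)
    · intro hh
      have := congrFun hh i
      rw [Function.update_self] at this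
      cases this
  · rintro ⟨f, l, g⟩ he
    rw [mem_poAuto] at he
    dsimp only
    rcases he with ⟨i, a, b, hee, hfi, _, rfl⟩ | ⟨i, hfi, _, rfl⟩
    · intro hh
      have := congrFun hh i
      rw [hfi] at this
      cases this
    · intro hh
      have := congrFun hh i
      rw [hfi] at this
      cases this
  · obtain ⟨w, hw⟩ := po_run rel A hirr htr
      (Finset.univ.filter fun j => (poAuto rel A).start j ≠ none).card (poAuto rel A).start
      le_rfl
      (by
        intro j s hs
        obtain rfl : s = (A j).start := (Option.some.inj hs).symm
        exact (hA j).nonempty)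
    exact ⟨w, hw⟩

end PO

/-! ### Main construction -/

lemma main_construction : ∀ ψ : POWL, ψ.WF →
    ∃ (γ : Type) (_ : Fintype γ) (B : Auto γ), Good B ∧ aLang B = ψ.lang := by
  intro ψ
  induction ψ with
  | ptrans l =>
    intro _
    refine ⟨Bool, inferInstance, trim (baseAuto l), good_trim (baseAuto_pre l), ?_⟩
    rw [aLang_trim, baseAuto_lang]
    cases l with
    | none => rfl
    | some a => rfl
  | po n rel ch ih =>
    rintro ⟨hn, hirr, htr, hch⟩
    choose β ft A hGood hLang using fun i => ih i (hch i)
    letI : ∀ i, Fintype (β i) := ft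
    have hPre : Pre (poAuto rel A) :=
      po_pre rel A (by omega) hirr htr (fun i => (hGood i).toPre)
    refine ⟨(∀ i, Option (β i)), inferInstance, trim (poAuto rel A), good_trim hPre, ?_⟩
    rw [aLang_trim, po_lang rel A hirr htr]
    show _ = POWL.lang _
    simp only [POWL.lang, hLang]
  | cg n sE eE ed ch ih =>
    rintro ⟨hn, hicg, hch⟩
    choose β ft A hGood hLang using fun i => ih i (hch i)
    letI : ∀ i, Fintype (β i) := ft
    have hlangC := cg_lang sE eE ed A (fun i => (hGood i).toPre)
    have hneC : (aLang (cgAuto sE eE ed A)).Nonempty := by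
      obtain ⟨p, hp, _⟩ := hicg.2.2.2.2 ⟨0, by omega⟩
      obtain ⟨σ, hσ⟩ := concatLangs_nonempty (p.map fun j => aLang (A j)) (by
        intro L hL
        rw [List.mem_map] at hL
        obtain ⟨j, _, rfl⟩ := hL
        exact (hGood j).nonempty)
      rw [hlangC]
      exact ⟨σ, p, hp, hσ⟩
    have hPre : Pre (cgAuto sE eE ed A) := cg_pre sE eE ed A (fun i => (hGood i).toPre) hneC
    refine ⟨CGS β, inferInstance, trim (cgAuto sE eE ed A), good_trim hPre, ?_⟩
    rw [aLang_trim, hlangC]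
    show _ = POWL.lang _
    simp only [POWL.lang, hLang]

end PowlProof




/-- For every POWL 2.0 model ψ there exists a safe and sound
separable WF-net N with L(N) = L(ψ). -/
theorem powl_has_separable_wfnet_representation
    (ψ : POWL) (hwf : ψ.WF) :
    ∃ N : Net, N.IsWF ∧ Separable N ∧ N.Safe ∧ N.Sound ∧ N.lang = ψ.lang := by
  obtain ⟨γ, ft, A, hG, hL⟩ := PowlProof.main_construction ψ hwf
  letI := ft
  let enc : γ ↪ ℕ :=
    (Fintype.equivFin γ).toEmbedding.trans ⟨Fin.val, Fin.val_injective⟩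
  refine ⟨PowlProof.netOf enc A, PowlProof.netOf_wf enc A hG,
    PowlProof.netOf_separable enc A hG, PowlProof.netOf_safe enc A hG.noself,
    PowlProof.netOf_sound enc A hG, ?_⟩
  rw [PowlProof.netOf_lang enc A hG.noself]
  exact hL

end
end
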